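/- arXiv:1401.7840 — 6 statements merged into one kernel-verified Lean document; each statement's English description precedes it below -/
import Mathlib

section
/- Let V be a quadratic stochastic operator on the simplex S^{m-1} with coefficients (p_{ij,k}). Then V is a Volterra operator (i.e. p_{ij,k} = 0 whenever k ∉ {i,j}) if and only if there exists a skew-symmetric real m×m matrix A = (a_{ij}) with a_{ii} = 0 and |a_{ij}| ≤ 1 for all i,j, such that for every x ∈ S^{m-1} and every k ∈ {1,…,m}, (Vx)_k = x_k (1 + ∑_{i=1}^m a_{ki} x_i); moreover one can take a_{ki} = 2 p_{ik,k} − 1 for i ≠ k. -/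
/-- A quadratic stochastic operator (with coefficients `p`) is a Volterra
operator iff there is a skew-symmetric matrix `A` with zero diagonal and `|A i j| ≤ 1`
such that `(Vx)_k = x_k (1 + ∑ i, A k i * x i)` on the simplex; moreover one can take
`A k i = 2 * p i k k - 1` for `i ≠ k`. -/
theorem volterra_iff_skew_repr (m : ℕ) (hm : 1 ≤ m)
    (p : Fin m → Fin m → Fin m → ℝ)
    (hsymm : ∀ i j k, p i j k = p j i k)
    (hnonneg : ∀ i j k, 0 ≤ p i j k)
    (hsum : ∀ i j, ∑ k, p i j k = 1) :
    ((∀ i j k, k ≠ i → k ≠ j → p i j k = 0) ↔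
      ∃ A : Fin m → Fin m → ℝ,
        (∀ i j, A i j = - A j i) ∧ (∀ i, A i i = 0) ∧ (∀ i j, |A i j| ≤ 1) ∧
        (∀ x ∈ stdSimplex ℝ (Fin m), ∀ k,
          (∑ i, ∑ j, p i j k * x i * x j) = x k * (1 + ∑ i, A k i * x i))) ∧
    ((∀ i j k, k ≠ i → k ≠ j → p i j k = 0) →
      ((∀ i j : Fin m, (if i = j then (0:ℝ) else 2 * p j i i - 1)
          = - (if j = i then (0:ℝ) else 2 * p i j j - 1)) ∧
       (∀ i j : Fin m, |(if i = j then (0:ℝ) else 2 * p j i i - 1)| ≤ 1) ∧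
       (∀ x ∈ stdSimplex ℝ (Fin m), ∀ k,
          (∑ i, ∑ j, p i j k * x i * x j)
            = x k * (1 + ∑ i, (if k = i then (0:ℝ) else 2 * p i k k - 1) * x i)))) := by
  have hple : ∀ i j k, p i j k ≤ 1 := by
    intro i j k
    calc p i j k ≤ ∑ l, p i j l :=
          Finset.single_le_sum (fun l _ => hnonneg i j l) (Finset.mem_univ k)
      _ = 1 := hsum i j
  have main : (∀ i j k, k ≠ i → k ≠ j → p i j k = 0) →
      ((∀ i j : Fin m, (if i = j then (0:ℝ) else 2 * p j i i - 1)
          = - (if j = i then (0:ℝ) else 2 * p i j j - 1)) ∧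
       (∀ i j : Fin m, |(if i = j then (0:ℝ) else 2 * p j i i - 1)| ≤ 1) ∧
       (∀ x ∈ stdSimplex ℝ (Fin m), ∀ k,
          (∑ i, ∑ j, p i j k * x i * x j)
            = x k * (1 + ∑ i, (if k = i then (0:ℝ) else 2 * p i k k - 1) * x i))) := by
    intro hV
    have hdiag : ∀ k, p k k k = 1 := by
      intro k
      have h := hsum k k
      rwa [Finset.sum_eq_single k (fun l _ hl => hV k k l hl hl)
        (fun h => absurd (Finset.mem_univ k) h)] at h
    have hpair : ∀ i k : Fin m, i ≠ k → p i k i + p i k k = 1 := by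
      intro i k hik
      have h1 : ∑ l, p i k l = 1 := hsum i k
      have h2 : ∑ l ∈ ({i, k} : Finset (Fin m)), p i k l = ∑ l, p i k l := by
        apply Finset.sum_subset (Finset.subset_univ _)
        intro l _ hl
        simp only [Finset.mem_insert, Finset.mem_singleton, not_or] at hl
        exact hV i k l hl.1 hl.2
      rw [Finset.sum_pair hik] at h2
      linarith [h2.trans h1]
    refine ⟨?_, ?_, ?_⟩
    · intro i j
      by_cases h : i = j
      · simp [h]
      · have h' : j ≠ i := fun e => h e.symm
        simp only [if_neg h, if_neg h']
        have h1 := hpair i j h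
        have h2 : p j i i = p i j i := hsymm j i i
        linarith
    · intro i j
      by_cases h : i = j
      · simp [h]
      · simp only [if_neg h]
        rw [abs_le]
        constructor <;> linarith [hnonneg j i i, hple j i i]
    · intro x hx k
      obtain ⟨hx0, hx1⟩ := hx
      set S := ∑ i, p i k k * x i with hS
      have inner : ∀ i : Fin m, (∑ j, p i j k * x i * x j)
          = p i k k * x i * x k + (if i = k then x k * S - x k * x k else 0) := by
        intro i
        by_cases hik : i = k
        · subst hik
          simp only [eq_self_iff_true, if_true]
          have h3 : ∑ j, p i j i * x i * x j = x i * ∑ j, p j i i * x j := by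
            rw [Finset.mul_sum]
            refine Finset.sum_congr rfl fun j _ => ?_
            rw [hsymm i j i]; ring
          rw [h3, hdiag i]
          ring
        · rw [Finset.sum_eq_single k
            (fun j _ hjk => by rw [hV i j k (Ne.symm hik) (Ne.symm hjk)]; ring)
            (fun h => absurd (Finset.mem_univ k) h), if_neg hik]
          ring
      rw [Finset.sum_congr rfl fun i _ => inner i, Finset.sum_add_distrib,
        Finset.sum_ite_eq' Finset.univ k (fun _ => x k * S - x k * x k),
        if_pos (Finset.mem_univ k), ← Finset.sum_mul]
      have rhs_inner : ∀ i : Fin m, (if k = i then (0:ℝ) else 2 * p i k k - 1) * x i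
          = (2 * p i k k - 1) * x i + (if k = i then -x i else 0) := by
        intro i
        by_cases h : k = i
        · subst h
          rw [if_pos rfl, if_pos rfl, hdiag k]; ring
        · rw [if_neg h, if_neg h]; ring
      rw [Finset.sum_congr rfl fun i _ => rhs_inner i, Finset.sum_add_distrib,
        Finset.sum_ite_eq Finset.univ k (fun i => -x i), if_pos (Finset.mem_univ k)]
      have h4 : ∑ i, (2 * p i k k - 1) * x i = 2 * S - 1 := by
        have : ∑ i, (2 * p i k k - 1) * x i
            = ∑ i, (2 * (p i k k * x i) - x i) := by
          refine Finset.sum_congr rfl fun i _ => by ring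
        rw [this, Finset.sum_sub_distrib, ← Finset.mul_sum, hx1, ← hS]
      rw [h4]
      ring
  constructor
  · constructor
    · intro hV
      obtain ⟨hs, hb, hr⟩ := main hV
      exact ⟨fun i j => if i = j then 0 else 2 * p j i i - 1, hs,
        fun i => if_pos rfl, hb, hr⟩
    · rintro ⟨A, hskew, hAdiag, hAbd, hrep⟩ i j k hki hkj
      set x : Fin m → ℝ :=
        fun l => (if l = i then (1:ℝ)/2 else 0) + (if l = j then 1/2 else 0) with hxdef
      have hx : x ∈ stdSimplex ℝ (Fin m) := by
        constructor
        · intro l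
          simp only [hxdef]
          split_ifs <;> norm_num
        · simp only [hxdef]
          rw [Finset.sum_add_distrib,
            Finset.sum_ite_eq' Finset.univ i (fun _ => (1:ℝ)/2),
            Finset.sum_ite_eq' Finset.univ j (fun _ => (1:ℝ)/2)]
          norm_num
      have hxk : x k = 0 := by
        simp only [hxdef, if_neg hki, if_neg hkj, add_zero]
      have h0 : ∑ i', ∑ j', p i' j' k * x i' * x j' = 0 := by
        rw [hrep x hx k, hxk, zero_mul]
      have hnn : ∀ i' ∈ Finset.univ, (0:ℝ) ≤ ∑ j', p i' j' k * x i' * x j' := by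
        intro i' _
        exact Finset.sum_nonneg fun j' _ =>
          mul_nonneg (mul_nonneg (hnonneg _ _ _) (hx.1 _)) (hx.1 _)
      have h1 := (Finset.sum_eq_zero_iff_of_nonneg hnn).mp h0 i (Finset.mem_univ i)
      have hnn2 : ∀ j' ∈ Finset.univ, (0:ℝ) ≤ p i j' k * x i * x j' := by
        intro j' _
        exact mul_nonneg (mul_nonneg (hnonneg _ _ _) (hx.1 _)) (hx.1 _)
      have h2 := (Finset.sum_eq_zero_iff_of_nonneg hnn2).mp h1 j (Finset.mem_univ j)
      have hxi : (0:ℝ) < x i := by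
        simp only [hxdef, if_pos rfl]
        split_ifs <;> norm_num
      have hxj : (0:ℝ) < x j := by
        simp only [hxdef, if_pos rfl]
        split_ifs <;> norm_num
      have h3 : p i j k * (x i * x j) = 0 := by linarith [h2, mul_assoc (p i j k) (x i) (x j)]
      exact (mul_eq_zero.mp h3).resolve_right (ne_of_gt (mul_pos hxi hxj))
  · exact main
end

section
/- Every Volterra quadratic stochastic operator V on the simplex S^{m-1} is a homeomorphism of S^{m-1} onto itself. -/
/-- The map of a quadratic stochastic operator given by coefficients `p`. -/
noncomputable def qsoMap {m : ℕ} (p : Fin m → Fin m → Fin m → ℝ) (x : Fin m → ℝ) :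
    Fin m → ℝ :=
  fun k => ∑ i, ∑ j, p i j k * x i * x j

open Finset

namespace VolterraAux

variable {n : ℕ}

/-- Key skew-symmetry summation identity. -/
lemma key_sum (c : Fin n → Fin n → ℝ) (hc : ∀ k i, c k i + c i k = 2)
    (u w : Fin n → ℝ) :
    (∑ k, u k * ∑ i, c k i * w i) + (∑ k, w k * ∑ i, c k i * u i)
      = 2 * (∑ k, u k) * (∑ k, w k) := by
  have h1 : (∑ k, u k * ∑ i, c k i * w i) = ∑ k, ∑ i, u k * (c k i * w i) := by
    simp [Finset.mul_sum]
  have h2 : (∑ k, w k * ∑ i, c k i * u i) = ∑ k, ∑ i, w i * (c i k * u k) := by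
    rw [Finset.sum_comm]
    simp [Finset.mul_sum]
  rw [h1, h2, ← Finset.sum_add_distrib]
  have h3 : ∀ k ∈ (univ : Finset (Fin n)),
      (∑ i, u k * (c k i * w i)) + (∑ i, w i * (c i k * u k))
        = ∑ i, 2 * (u k * w i) := by
    intro k _
    rw [← Finset.sum_add_distrib]
    refine Finset.sum_congr rfl fun i _ => ?_
    linear_combination (u k * w i) * hc k i
  rw [Finset.sum_congr rfl h3]
  have h4 : 2 * (∑ k, u k) * (∑ k, w k) = 2 * ((∑ k, u k) * (∑ k, w k)) := by ring
  rw [h4, Finset.sum_mul_sum, Finset.mul_sum]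
  exact Finset.sum_congr rfl fun k _ => by rw [Finset.mul_sum]

lemma quad_sum (c : Fin n → Fin n → ℝ) (hc : ∀ k i, c k i + c i k = 2)
    (u : Fin n → ℝ) :
    (∑ k, u k * ∑ i, c k i * u i) = (∑ k, u k) ^ 2 := by
  have := key_sum c hc u u
  nlinarith [this]

end VolterraAux

namespace VolterraAux

variable {n : ℕ} (p : Fin n → Fin n → Fin n → ℝ)

/-- The skew coefficient matrix of a Volterra operator. -/
def cMat : Fin n → Fin n → ℝ := fun k i => if i = k then 1 else 2 * p k i k

lemma cMat_nonneg (hnonneg : ∀ i j k, 0 ≤ p i j k) (k i : Fin n) : 0 ≤ cMat p k i := by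
  unfold cMat
  split
  · norm_num
  · linarith [hnonneg k i k]

lemma cMat_diag (k : Fin n) : cMat p k k = 1 := by simp [cMat]

lemma cMat_add (hsymm : ∀ i j k, p i j k = p j i k)
    (hsum : ∀ i j, ∑ k, p i j k = 1)
    (hvol : ∀ i j k, k ≠ i → k ≠ j → p i j k = 0)
    (k i : Fin n) : cMat p k i + cMat p i k = 2 := by
  rcases eq_or_ne i k with rfl | hik
  · norm_num [cMat]
  · have h1 : ∑ j, p k i j = 1 := hsum k i
    have h2 : ∑ j, p k i j = p k i k + p k i i := by
      rw [← Finset.sum_subset (Finset.subset_univ {k, i})]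
      · rw [Finset.sum_pair (Ne.symm hik)]
      · intro j _ hj
        simp only [Finset.mem_insert, Finset.mem_singleton, not_or] at hj
        exact hvol k i j hj.1 hj.2
    have h3 : p i k i = p k i i := hsymm i k i
    simp only [cMat, if_neg hik, if_neg (Ne.symm hik)]
    rw [h3]
    linarith [h1.symm.trans h2]

lemma qso_eq (hsymm : ∀ i j k, p i j k = p j i k)
    (hsum : ∀ i j, ∑ k, p i j k = 1)
    (hvol : ∀ i j k, k ≠ i → k ≠ j → p i j k = 0)
    (x : Fin n → ℝ) (k : Fin n) :
    qsoMap p x k = x k * ∑ i, cMat p k i * x i := by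
  have pkkk : p k k k = 1 := by
    have h1 : ∑ j, p k k j = 1 := hsum k k
    have h2 : ∑ j, p k k j = p k k k := by
      rw [← Finset.sum_subset (Finset.subset_univ {k})]
      · rw [Finset.sum_singleton]
      · intro j _ hj
        simp only [Finset.mem_singleton] at hj
        exact hvol k k j hj hj
    linarith
  have inner : ∀ i, i ≠ k → (∑ j, p i j k * x i * x j) = p k i k * x i * x k := by
    intro i hi
    rw [Finset.sum_eq_single_of_mem k (Finset.mem_univ k)]
    · rw [hsymm i k k]
    · intro j _ hj
      rw [hvol i j k (Ne.symm hi) (Ne.symm hj)]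
      ring
  show (∑ i, ∑ j, p i j k * x i * x j) = _
  rw [Finset.sum_eq_sum_sdiff_singleton_add (Finset.mem_univ k)
        (fun i => ∑ j, p i j k * x i * x j),
      Finset.sum_congr rfl (fun i hi => inner i
        (Finset.notMem_singleton.mp (Finset.mem_sdiff.mp hi).2)),
      Finset.sum_eq_sum_sdiff_singleton_add (Finset.mem_univ k)
        (fun j => p k j k * x k * x j),
      pkkk, Finset.mul_sum,
      Finset.sum_eq_sum_sdiff_singleton_add (Finset.mem_univ k)
        (fun i => x k * (cMat p k i * x i)),
      cMat_diag]
  have hcomb : (∑ i ∈ Finset.univ \ {k}, p k i k * x i * x k)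
      + (∑ i ∈ Finset.univ \ {k}, p k i k * x k * x i)
      = ∑ i ∈ Finset.univ \ {k}, x k * (cMat p k i * x i) := by
    rw [← Finset.sum_add_distrib]
    refine Finset.sum_congr rfl fun i hi => ?_
    have hik : i ≠ k := Finset.notMem_singleton.mp (Finset.mem_sdiff.mp hi).2
    simp only [cMat, if_neg hik]
    ring
  linear_combination hcomb

end VolterraAux

namespace VolterraAux

variable {n : ℕ} (p : Fin n → Fin n → Fin n → ℝ)

lemma qso_sum (hsum : ∀ i j, ∑ k, p i j k = 1) (x : Fin n → ℝ) :
    ∑ k, qsoMap p x k = (∑ i, x i) ^ 2 := by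
  unfold qsoMap
  rw [Finset.sum_comm]
  have h1 : ∀ i ∈ (Finset.univ : Finset (Fin n)),
      (∑ k, ∑ j, p i j k * x i * x j) = ∑ j, x i * x j := by
    intro i _
    rw [Finset.sum_comm]
    refine Finset.sum_congr rfl fun j _ => ?_
    have : (∑ k, p i j k * x i * x j) = (∑ k, p i j k) * (x i * x j) := by
      rw [Finset.sum_mul]
      exact Finset.sum_congr rfl fun k _ => by ring
    rw [this, hsum i j, one_mul]
  rw [Finset.sum_congr rfl h1, sq, Finset.sum_mul_sum]

lemma qso_mem (hnonneg : ∀ i j k, 0 ≤ p i j k) (hsum : ∀ i j, ∑ k, p i j k = 1)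
    {x : Fin n → ℝ} (hx : x ∈ stdSimplex ℝ (Fin n)) :
    qsoMap p x ∈ stdSimplex ℝ (Fin n) := by
  constructor
  · intro k
    refine Finset.sum_nonneg fun i _ => Finset.sum_nonneg fun j _ => ?_
    exact mul_nonneg (mul_nonneg (hnonneg i j k) (hx.1 i)) (hx.1 j)
  · rw [qso_sum p hsum, hx.2]
    norm_num

lemma qso_continuous : Continuous (qsoMap p) := by
  refine continuous_pi fun k => ?_
  refine continuous_finset_sum _ fun i _ => continuous_finset_sum _ fun j _ => ?_
  exact (continuous_const.mul (continuous_apply i)).mul (continuous_apply j)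

/-- The linear form attached to row `k` of `c`. -/
def gFun (c : Fin n → Fin n → ℝ) (k : Fin n) (z : Fin n → ℝ) : ℝ := ∑ i, c k i * z i

lemma gFun_sub (c : Fin n → Fin n → ℝ) (k : Fin n) (x y : Fin n → ℝ) :
    gFun c k x - gFun c k y = gFun c k (fun i => x i - y i) := by
  unfold gFun
  rw [← Finset.sum_sub_distrib]
  exact Finset.sum_congr rfl fun i _ => by ring

lemma gFun_nonneg {c : Fin n → Fin n → ℝ} (hc0 : ∀ k i, 0 ≤ c k i) (k : Fin n)
    {x : Fin n → ℝ} (hx : ∀ i, 0 ≤ x i) : 0 ≤ gFun c k x :=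
  Finset.sum_nonneg fun i _ => mul_nonneg (hc0 k i) (hx i)

lemma gFun_lower {c : Fin n → Fin n → ℝ} (hc0 : ∀ k i, 0 ≤ c k i)
    (hcd : ∀ k, c k k = 1) (k : Fin n)
    {x : Fin n → ℝ} (hx : ∀ i, 0 ≤ x i) : x k ≤ gFun c k x := by
  have := Finset.single_le_sum (f := fun i => c k i * x i)
    (fun i _ => mul_nonneg (hc0 k i) (hx i)) (Finset.mem_univ k)
  unfold gFun
  rw [← one_mul (x k), ← hcd k]
  exact this

lemma quad_sum' (c : Fin n → Fin n → ℝ) (hc : ∀ k i, c k i + c i k = 2)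
    (u : Fin n → ℝ) :
    (∑ k, u k * gFun c k u) = (∑ k, u k) ^ 2 :=
  quad_sum c hc u

/-- Injectivity of a Volterra QSO (in normal form) on the simplex. -/
lemma inj_aux (c : Fin n → Fin n → ℝ) (hc2 : ∀ k i, c k i + c i k = 2)
    (hc0 : ∀ k i, 0 ≤ c k i) (hcd : ∀ k, c k k = 1)
    {x y : Fin n → ℝ} (hx : x ∈ stdSimplex ℝ (Fin n)) (hy : y ∈ stdSimplex ℝ (Fin n))
    (hW : ∀ k, x k * gFun c k x = y k * gFun c k y) : x = y := by
  classical
  have hzero : ∀ k, ¬ (0 < x k + y k) → x k = y k := by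
    intro k hk
    have h1 := hx.1 k; have h2 := hy.1 k
    have : x k = 0 ∧ y k = 0 := by constructor <;> linarith [not_lt.mp hk]
    rw [this.1, this.2]
  set T : Finset (Fin n) := Finset.univ.filter (fun k => 0 < x k + y k) with hT
  have hd : (∑ k, (x k - y k) * (gFun c k x - gFun c k y)) = 0 := by
    have : (∑ k, (x k - y k) * (gFun c k x - gFun c k y))
        = ∑ k, (x k - y k) * gFun c k (fun i => x i - y i) := by
      exact Finset.sum_congr rfl fun k _ => by rw [gFun_sub]
    rw [this, quad_sum' c hc2 (fun k => x k - y k), Finset.sum_sub_distrib, hx.2, hy.2]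
    norm_num
  have hdT : (∑ k ∈ T, (x k - y k) * (gFun c k x - gFun c k y)) = 0 := by
    rw [← hd]
    refine Finset.sum_subset (Finset.subset_univ T) fun k _ hk => ?_
    rw [hzero k (by simpa [hT] using hk)]; ring
  have hmain : (∑ k ∈ T, ((x k - y k) ^ 2 / (x k + y k)) * (gFun c k x + gFun c k y)) = 0 := by
    have hterm : ∀ k ∈ T, ((x k - y k) ^ 2 / (x k + y k)) * (gFun c k x + gFun c k y)
        = - ((x k - y k) * (gFun c k x - gFun c k y)) := by
      intro k hk
      have hw : (0:ℝ) < x k + y k := by simpa [hT] using hk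
      rw [div_mul_eq_mul_div, div_eq_iff hw.ne']
      linear_combination (2*(x k - y k)) * hW k
    rw [Finset.sum_congr rfl hterm, Finset.sum_neg_distrib, hdT, neg_zero]
  funext k
  by_cases hk : k ∈ T
  · have hw : (0:ℝ) < x k + y k := by simpa [hT] using hk
    have hgx : x k ≤ gFun c k x := gFun_lower hc0 hcd k hx.1
    have hgy : y k ≤ gFun c k y := gFun_lower hc0 hcd k hy.1
    have hpos : 0 < gFun c k x + gFun c k y := by linarith
    have hnn : ∀ j ∈ T, 0 ≤ ((x j - y j) ^ 2 / (x j + y j)) * (gFun c j x + gFun c j y) := by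
      intro j hj
      have hwj : (0:ℝ) < x j + y j := by simpa [hT] using hj
      have hgxj : 0 ≤ gFun c j x := gFun_nonneg hc0 j hx.1
      have hgyj : 0 ≤ gFun c j y := gFun_nonneg hc0 j hy.1
      positivity
    have hz := (Finset.sum_eq_zero_iff_of_nonneg hnn).mp hmain k hk
    have h2 : (x k - y k) ^ 2 = 0 := by
      by_contra h3
      have h4 : 0 < (x k - y k) ^ 2 := lt_of_le_of_ne (sq_nonneg _) (Ne.symm h3)
      have : 0 < ((x k - y k) ^ 2 / (x k + y k)) * (gFun c k x + gFun c k y) := by positivity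
      linarith
    have h5 := pow_eq_zero_iff (n := 2) (by norm_num) |>.mp h2
    linarith [sub_eq_zero.mp h5]
  · exact hzero k (by simpa [hT] using hk)

lemma qso_inj (hsymm : ∀ i j k, p i j k = p j i k)
    (hnonneg : ∀ i j k, 0 ≤ p i j k)
    (hsum : ∀ i j, ∑ k, p i j k = 1)
    (hvol : ∀ i j k, k ≠ i → k ≠ j → p i j k = 0)
    {x y : Fin n → ℝ} (hx : x ∈ stdSimplex ℝ (Fin n)) (hy : y ∈ stdSimplex ℝ (Fin n))
    (hxy : qsoMap p x = qsoMap p y) : x = y := by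
  refine inj_aux (cMat p) (cMat_add p hsymm hsum hvol) (cMat_nonneg p hnonneg)
    (cMat_diag p) hx hy fun k => ?_
  have := congrFun hxy k
  rwa [qso_eq p hsymm hsum hvol x k, qso_eq p hsymm hsum hvol y k] at this

end VolterraAux

namespace VolterraAux

variable {n : ℕ}

/-- The linear form `gFun` as a continuous linear map. -/
noncomputable def Gclm (c : Fin n → Fin n → ℝ) (k : Fin n) : (Fin n → ℝ) →L[ℝ] ℝ :=
  ∑ i, c k i • ContinuousLinearMap.proj i

lemma Gclm_apply (c : Fin n → Fin n → ℝ) (k : Fin n) (x : Fin n → ℝ) :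
    Gclm c k x = gFun c k x := by
  simp [Gclm, gFun, ContinuousLinearMap.sum_apply]

/-- The normal form of a Volterra QSO. -/
noncomputable def Wfun (c : Fin n → Fin n → ℝ) (x : Fin n → ℝ) : Fin n → ℝ :=
  fun k => x k * gFun c k x

/-- The Jacobian of `Wfun`. -/
noncomputable def Jmap (c : Fin n → Fin n → ℝ) (x : Fin n → ℝ) :
    (Fin n → ℝ) →L[ℝ] (Fin n → ℝ) :=
  ContinuousLinearMap.pi fun k =>
    gFun c k x • ContinuousLinearMap.proj k + x k • Gclm c k

lemma Jmap_apply (c : Fin n → Fin n → ℝ) (x v : Fin n → ℝ) (k : Fin n) :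
    Jmap c x v k = gFun c k x * v k + x k * gFun c k v := by
  simp [Jmap, ContinuousLinearMap.pi_apply, Gclm_apply, smul_eq_mul]

lemma hasStrictFDerivAt_W (c : Fin n → Fin n → ℝ) (x : Fin n → ℝ) :
    HasStrictFDerivAt (Wfun c) (Jmap c x) x := by
  apply hasStrictFDerivAt_pi''
  intro k
  have h1 : HasStrictFDerivAt (fun y : Fin n → ℝ => y k)
      ((ContinuousLinearMap.proj k : (Fin n → ℝ) →L[ℝ] ℝ)) x :=
    hasStrictFDerivAt_apply (𝕜 := ℝ) k x
  have h2 : HasStrictFDerivAt (fun y : Fin n → ℝ => gFun c k y) (Gclm c k) x := by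
    have h := (Gclm c k).hasStrictFDerivAt (x := x)
    have he : ⇑(Gclm c k) = fun y => gFun c k y := funext (Gclm_apply c k)
    rwa [he] at h
  have h3 := h1.mul h2
  have hcomp : (ContinuousLinearMap.proj k).comp (Jmap c x)
      = x k • Gclm c k + gFun c k x • ContinuousLinearMap.proj k := by
    ext v
    simp [Jmap, ContinuousLinearMap.pi_apply]
    ring
  rw [hcomp]
  exact h3

lemma Jmap_ker (c : Fin n → Fin n → ℝ) (hc2 : ∀ k i, c k i + c i k = 2)
    (hc0 : ∀ k i, 0 ≤ c k i) (hcd : ∀ k, c k k = 1)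
    {x : Fin n → ℝ} (hx : ∀ k, 0 < x k) (hxs : ∑ k, x k = 1)
    (v : Fin n → ℝ) (hv : Jmap c x v = 0) : v = 0 := by
  have hxnn : ∀ k, 0 ≤ x k := fun k => (hx k).le
  -- step 1 : the sum of v vanishes
  have h0 : ∑ k, (gFun c k x * v k + x k * gFun c k v) = 0 := by
    have : ∑ k, Jmap c x v k = 0 := by rw [hv]; simp
    rw [← this]
    exact Finset.sum_congr rfl fun k _ => (Jmap_apply c x v k).symm
  have hsv : ∑ k, v k = 0 := by
    have key := key_sum c hc2 v x
    rw [Finset.sum_add_distrib] at h0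
    have e1 : ∑ k, gFun c k x * v k = ∑ k, v k * ∑ i, c k i * x i :=
      Finset.sum_congr rfl fun k _ => by rw [mul_comm]; rfl
    have e2 : ∑ k, x k * gFun c k v = ∑ k, x k * ∑ i, c k i * v i :=
      Finset.sum_congr rfl fun k _ => rfl
    rw [e1, e2] at h0
    rw [hxs] at key
    linarith
  -- step 2 : weighted sum
  have h1 : ∑ k, ((v k) ^ 2 / x k * gFun c k x + v k * gFun c k v) = 0 := by
    have hz : ∑ k, (v k / x k) * Jmap c x v k = 0 := by rw [hv]; simp
    rw [← hz]
    refine Finset.sum_congr rfl fun k _ => ?_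
    rw [Jmap_apply]
    have hxk : x k ≠ 0 := (hx k).ne'
    field_simp
  have h2 : ∑ k, v k * gFun c k v = 0 := by
    rw [quad_sum' c hc2 v, hsv]
    norm_num
  rw [Finset.sum_add_distrib, h2, add_zero] at h1
  have hnn : ∀ k ∈ (Finset.univ : Finset (Fin n)), 0 ≤ (v k) ^ 2 / x k * gFun c k x := by
    intro k _
    exact mul_nonneg (div_nonneg (sq_nonneg _) (hxnn k)) (gFun_nonneg hc0 k hxnn)
  funext k
  have hz := (Finset.sum_eq_zero_iff_of_nonneg hnn).mp h1 k (Finset.mem_univ k)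
  have hgx : 0 < gFun c k x := lt_of_lt_of_le (hx k) (gFun_lower hc0 hcd k hxnn)
  have : v k ^ 2 = 0 := by
    by_contra h3
    have h4 : 0 < (v k) ^ 2 := lt_of_le_of_ne (sq_nonneg _) (Ne.symm h3)
    have : 0 < (v k) ^ 2 / x k * gFun c k x := mul_pos (div_pos h4 (hx k)) hgx
    linarith
  simpa using pow_eq_zero_iff (n := 2) (by norm_num) |>.mp this

lemma Wfun_map_nhds (c : Fin n → Fin n → ℝ) (hc2 : ∀ k i, c k i + c i k = 2)
    (hc0 : ∀ k i, 0 ≤ c k i) (hcd : ∀ k, c k k = 1)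
    {x : Fin n → ℝ} (hx : ∀ k, 0 < x k) (hxs : ∑ k, x k = 1) :
    Filter.map (Wfun c) (nhds x) = nhds (Wfun c x) := by
  have hd := hasStrictFDerivAt_W c x
  set L := Jmap c x with hL
  have hinj : Function.Injective L := by
    intro a b hab
    have h1 : L (a - b) = 0 := by rw [map_sub, hab, sub_self]
    have h2 := Jmap_ker c hc2 hc0 hcd hx hxs (a - b) h1
    exact sub_eq_zero.mp h2
  have hbij : Function.Bijective (L : (Fin n → ℝ) →ₗ[ℝ] (Fin n → ℝ)) :=
    ⟨hinj, LinearMap.injective_iff_surjective.mp hinj⟩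
  let eL : (Fin n → ℝ) ≃ₗ[ℝ] (Fin n → ℝ) :=
    LinearEquiv.ofBijective (L : (Fin n → ℝ) →ₗ[ℝ] (Fin n → ℝ)) hbij
  let e := eL.toContinuousLinearEquiv
  have hce : (e : (Fin n → ℝ) →L[ℝ] (Fin n → ℝ)) = L := by ext v; rfl
  have hd2 : HasStrictFDerivAt (Wfun c) ((e : (Fin n → ℝ) →L[ℝ] (Fin n → ℝ))) x := by
    rw [hce]; exact hd
  exact hd2.map_nhds_eq_of_equiv

end VolterraAux

namespace VolterraAux

lemma qso_surj : ∀ (n : ℕ) (p : Fin n → Fin n → Fin n → ℝ),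
    (∀ i j k, p i j k = p j i k) → (∀ i j k, 0 ≤ p i j k) →
    (∀ i j, ∑ k, p i j k = 1) → (∀ i j k, k ≠ i → k ≠ j → p i j k = 0) →
    ∀ y ∈ stdSimplex ℝ (Fin n), ∃ x ∈ stdSimplex ℝ (Fin n), qsoMap p x = y := by
  intro n
  induction n with
  | zero =>
    intro p _ _ _ _ y hy
    exact absurd hy.2 (by simp)
  | succ n IH =>
    intro p hsymm hnonneg hsum hvol y hy
    by_cases hbd : ∃ k0, y k0 = 0
    · obtain ⟨k0, hk0⟩ := hbd
      have hinj : Function.Injective k0.succAbove := Fin.succAbove_right_injective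
      have hne : ∀ l, k0 ≠ k0.succAbove l := fun l => (Fin.succAbove_ne k0 l).symm
      set p' : Fin n → Fin n → Fin n → ℝ :=
        fun i j k => p (k0.succAbove i) (k0.succAbove j) (k0.succAbove k) with hp'
      have hsymm' : ∀ i j k, p' i j k = p' j i k := fun i j k => hsymm _ _ _
      have hnonneg' : ∀ i j k, 0 ≤ p' i j k := fun i j k => hnonneg _ _ _
      have hvol' : ∀ i j k, k ≠ i → k ≠ j → p' i j k = 0 := fun i j k h1 h2 =>
        hvol _ _ _ (fun h => h1 (hinj h)) (fun h => h2 (hinj h))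
      have hsum' : ∀ i j, ∑ k, p' i j k = 1 := by
        intro i j
        have h := Fin.sum_univ_succAbove
          (fun k => p (k0.succAbove i) (k0.succAbove j) k) k0
        rw [hsum, hvol _ _ _ (hne i) (hne j), zero_add] at h
        exact h.symm
      set y' : Fin n → ℝ := fun l => y (k0.succAbove l) with hy'def
      have hy' : y' ∈ stdSimplex ℝ (Fin n) := by
        refine ⟨fun l => hy.1 _, ?_⟩
        have h := Fin.sum_univ_succAbove y k0
        rw [hy.2, hk0, zero_add] at h
        exact h.symm
      obtain ⟨x', hx', hVx'⟩ := IH p' hsymm' hnonneg' hsum' hvol' y' hy'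
      set x : Fin (n+1) → ℝ := k0.insertNth 0 x' with hxdef
      have hx0 : x k0 = 0 := by rw [hxdef]; exact Fin.insertNth_apply_same (α := fun _ => ℝ) k0 0 x'
      have hxs : ∀ l, x (k0.succAbove l) = x' l := fun l => by
        rw [hxdef]; exact Fin.insertNth_apply_succAbove (α := fun _ => ℝ) k0 0 x' l
      refine ⟨x, ⟨?_, ?_⟩, ?_⟩
      · intro k
        rcases eq_or_ne k k0 with rfl | hk
        · rw [hx0]
        · obtain ⟨l, rfl⟩ := Fin.exists_succAbove_eq hk
          rw [hxs l]
          exact hx'.1 l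
      · rw [Fin.sum_univ_succAbove x k0, hx0, zero_add,
          Finset.sum_congr rfl (fun l _ => hxs l)]
        exact hx'.2
      · funext k
        rcases eq_or_ne k k0 with rfl | hk
        · rw [qso_eq p hsymm hsum hvol, hx0, zero_mul, hk0]
        · obtain ⟨l, rfl⟩ := Fin.exists_succAbove_eq hk
          show (∑ i, ∑ j, p i j (k0.succAbove l) * x i * x j) = y (k0.succAbove l)
          rw [Fin.sum_univ_succAbove
            (fun i => ∑ j, p i j (k0.succAbove l) * x i * x j) k0]
          have hzi : (∑ j, p k0 j (k0.succAbove l) * x k0 * x j) = 0 :=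
            Finset.sum_eq_zero fun j _ => by rw [hx0]; ring
          rw [hzi, zero_add]
          have hinner : ∀ i' : Fin n,
              (∑ j, p (k0.succAbove i') j (k0.succAbove l) * x (k0.succAbove i') * x j)
              = ∑ j', p' i' j' l * x' i' * x' j' := by
            intro i'
            rw [Fin.sum_univ_succAbove
              (fun j => p (k0.succAbove i') j (k0.succAbove l) * x (k0.succAbove i') * x j) k0,
              hx0, mul_zero, zero_add]
            exact Finset.sum_congr rfl fun j' _ => by rw [hxs i', hxs j', hp']
          rw [Finset.sum_congr rfl (fun i' _ => hinner i')]
          exact congrFun hVx' l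
    · push_neg at hbd
      have hypos : ∀ k, 0 < y k := fun k => lt_of_le_of_ne (hy.1 k) (Ne.symm (hbd k))
      set c := cMat p with hcdef
      have hc2 : ∀ k i, c k i + c i k = 2 := cMat_add p hsymm hsum hvol
      have hc0 : ∀ k i, 0 ≤ c k i := cMat_nonneg p hnonneg
      have hcd : ∀ k, c k k = 1 := cMat_diag p
      have hWq : qsoMap p = Wfun c := funext fun x => funext fun k =>
        qso_eq p hsymm hsum hvol x k
      set S := stdSimplex ℝ (Fin (n+1)) with hSdef
      set K := Wfun c '' S with hKdef
      have hKcpt : IsCompact K := by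
        refine (isCompact_stdSimplex ℝ _).image ?_
        rw [← hWq]
        exact qso_continuous p
      have hKcl : IsClosed K := hKcpt.isClosed
      set IntS : Set (Fin (n+1) → ℝ) := {x | (∀ k, 0 < x k) ∧ ∑ k, x k = 1} with hIdef
      have hIntS_sub : IntS ⊆ S := fun x hx => ⟨fun k => (hx.1 k).le, hx.2⟩
      have hWsum : ∀ x : Fin (n+1) → ℝ, (∑ k, Wfun c x k) = (∑ k, x k)^2 := by
        intro x
        rw [← hWq]
        exact qso_sum p hsum x
      have hWInt : ∀ x ∈ IntS, Wfun c x ∈ IntS := by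
        intro x hx
        refine ⟨fun k => ?_, by rw [hWsum x, hx.2]; norm_num⟩
        have h1 : 0 < gFun c k x :=
          lt_of_lt_of_le (hx.1 k) (gFun_lower hc0 hcd k (fun i => (hx.1 i).le))
        exact mul_pos (hx.1 k) h1
      have hpre : ∀ z ∈ IntS ∩ K, ∃ x ∈ IntS, Wfun c x = z := by
        rintro z ⟨hzI, x, hxS, rfl⟩
        refine ⟨x, ⟨fun k => ?_, hxS.2⟩, rfl⟩
        by_contra h
        have hx0 : x k = 0 := le_antisymm (not_lt.mp h) (hxS.1 k)
        have hz0 : Wfun c x k = 0 := by unfold Wfun; rw [hx0, zero_mul]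
        exact (hzI.1 k).ne' hz0
      set Pos : Set (Fin (n+1) → ℝ) := {x | ∀ k, 0 < x k} with hPosdef
      have hPosOpen : IsOpen Pos := by
        have he : Pos = ⋂ k, {x : Fin (n+1) → ℝ | 0 < x k} := by
          ext z; simp [hPosdef, Set.mem_iInter]
        rw [he]
        exact isOpen_iInter_of_finite fun k =>
          isOpen_lt continuous_const (continuous_apply k)
      set O := interior (Wfun c '' Pos) with hOdef
      have hO1 : IntS ∩ K ⊆ O := by
        intro z hz
        obtain ⟨x, hxI, hxz⟩ := hpre z hz
        have hmap := Wfun_map_nhds c hc2 hc0 hcd hxI.1 hxI.2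
        have hmem : Wfun c '' Pos ∈ nhds z := by
          rw [← hxz, ← hmap]
          exact Filter.image_mem_map (hPosOpen.mem_nhds hxI.1)
        exact mem_interior_iff_mem_nhds.mpr hmem
      have hO2 : IntS ∩ O ⊆ K := by
        rintro z ⟨hzI, hzO⟩
        obtain ⟨x, hxPos, hxz⟩ := interior_subset hzO
        have hz1 : (∑ k, x k)^2 = 1 := by
          rw [← hWsum x, hxz]
          exact hzI.2
        have hspos : 0 < ∑ k, x k :=
          Finset.sum_pos (fun k _ => hxPos k) Finset.univ_nonempty
        have hs1 : ∑ k, x k = 1 := by nlinarith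
        exact ⟨x, ⟨fun k => (hxPos k).le, hs1⟩, hxz⟩
      have hconv : Convex ℝ IntS := by
        intro u hu v hv a b ha hb hab
        constructor
        · intro k
          show 0 < a * u k + b * v k
          rcases lt_or_eq_of_le ha with ha' | ha'
          · have h1 : 0 < a * u k := mul_pos ha' (hu.1 k)
            have h2 : 0 ≤ b * v k := mul_nonneg hb (hv.1 k).le
            linarith
          · have hb1 : b = 1 := by linarith
            rw [← ha', hb1, zero_mul, one_mul, zero_add]
            exact hv.1 k
        · show (∑ k, (a * u k + b * v k)) = 1
          rw [Finset.sum_add_distrib, ← Finset.mul_sum, ← Finset.mul_sum, hu.2, hv.2]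
          linarith
      have hconn : IsPreconnected IntS := hconv.isPreconnected
      have hbI : (fun _ : Fin (n+1) => ((n:ℝ)+1)⁻¹) ∈ IntS := by
        have hn0 : ((n:ℝ)+1) ≠ 0 := by positivity
        constructor
        · intro k
          positivity
        · show (∑ _k : Fin (n+1), ((n:ℝ)+1)⁻¹) = 1
          rw [Finset.sum_const, Finset.card_univ, Fintype.card_fin, nsmul_eq_mul]
          push_cast
          field_simp
      have hyK : y ∈ K := by
        by_contra hyK
        have hcover : IntS ⊆ O ∪ Kᶜ := by
          intro z hz
          by_cases hzK : z ∈ K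
          · exact Or.inl (hO1 ⟨hz, hzK⟩)
          · exact Or.inr hzK
        have hne1 : (IntS ∩ O).Nonempty := by
          refine ⟨Wfun c (fun _ => ((n:ℝ)+1)⁻¹), hWInt _ hbI, ?_⟩
          exact hO1 ⟨hWInt _ hbI, ⟨_, hIntS_sub hbI, rfl⟩⟩
        have hne2 : (IntS ∩ Kᶜ).Nonempty := ⟨y, ⟨hypos, hy.2⟩, hyK⟩
        obtain ⟨z, hzI, hzO, hzK⟩ := hconn O Kᶜ isOpen_interior hKcl.isOpen_compl
          hcover hne1 hne2
        exact hzK (hO2 ⟨hzI, hzO⟩)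
      obtain ⟨x, hxS, hxy⟩ := hyK
      exact ⟨x, hxS, by rw [hWq]; exact hxy⟩



end VolterraAux


/-- Every Volterra quadratic stochastic operator on the simplex `S^{m-1}`
is a homeomorphism of the simplex onto itself. -/
theorem volterra_qso_homeomorph (m : ℕ) (hm : 1 ≤ m)
    (p : Fin m → Fin m → Fin m → ℝ)
    (hsymm : ∀ i j k, p i j k = p j i k)
    (hnonneg : ∀ i j k, 0 ≤ p i j k)
    (hsum : ∀ i j, ∑ k, p i j k = 1)
    (hvol : ∀ i j k, k ≠ i → k ≠ j → p i j k = 0) :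
    ∃ h : {x : Fin m → ℝ // x ∈ stdSimplex ℝ (Fin m)} ≃ₜ
          {x : Fin m → ℝ // x ∈ stdSimplex ℝ (Fin m)},
      ∀ x : {x : Fin m → ℝ // x ∈ stdSimplex ℝ (Fin m)},
        (h x : Fin m → ℝ) = qsoMap p (x : Fin m → ℝ) := by
  classical
  haveI : CompactSpace {x : Fin m → ℝ // x ∈ stdSimplex ℝ (Fin m)} :=
    isCompact_iff_compactSpace.mp (isCompact_stdSimplex ℝ (Fin m))
  let F : {x : Fin m → ℝ // x ∈ stdSimplex ℝ (Fin m)} →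
      {x : Fin m → ℝ // x ∈ stdSimplex ℝ (Fin m)} :=
    fun x => ⟨qsoMap p x.1, VolterraAux.qso_mem p hnonneg hsum x.2⟩
  have hFcont : Continuous F :=
    ((VolterraAux.qso_continuous p).comp continuous_subtype_val).subtype_mk _
  have hFbij : Function.Bijective F := by
    constructor
    · intro a b hab
      exact Subtype.ext (VolterraAux.qso_inj p hsymm hnonneg hsum hvol a.2 b.2
        (congrArg Subtype.val hab))
    · intro z
      obtain ⟨x, hx, hxz⟩ := VolterraAux.qso_surj m p hsymm hnonneg hsum hvol z.1 z.2
      exact ⟨⟨x, hx⟩, Subtype.ext hxz⟩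
  have hE : Continuous (Equiv.ofBijective F hFbij) := hFcont
  exact ⟨Continuous.homeoOfEquivCompactToT2 (f := Equiv.ofBijective F hFbij) hE,
    fun x => rfl⟩
end

section
/- Let V be a Volterra quadratic stochastic operator on S^{m-1} and let x ∈ S^{m-1} be a point that is not a fixed point of V. Then the ω-limit set of the trajectory (V^n x)_{n≥0} is contained in the boundary ∂S^{m-1} of the simplex, i.e. every accumulation point y of the sequence (V^n x) satisfies y_1 y_2 ⋯ y_m = 0. -/
open Finset

/-- Dot product on `Fin d → ℝ`. -/
noncomputable def dotp {d : ℕ} (v w : Fin d → ℝ) : ℝ := ∑ k, v k * w k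

lemma dotp_self_pos {d : ℕ} {c : Fin d → ℝ} (hc : c ≠ 0) : 0 < dotp c c := by
  have : ∃ k, c k ≠ 0 := by
    by_contra h; push_neg at h; exact hc (funext h)
  obtain ⟨k, hk⟩ := this
  exact Finset.sum_pos' (fun i _ => mul_self_nonneg _) ⟨k, mem_univ k, mul_self_pos.2 hk⟩

lemma dotp_smul_sub {d : ℕ} (a b : ℝ) (u u' w : Fin d → ℝ) :
    dotp (a • u - b • u') w = a * dotp u w - b * dotp u' w := by
  simp only [dotp, Pi.sub_apply, Pi.smul_apply, smul_eq_mul, sub_mul, mul_assoc,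
    Finset.sum_sub_distrib, Finset.mul_sum]

lemma dotp_sub_right {d : ℕ} (w : Fin d → ℝ) (a b : ℝ) (u u' : Fin d → ℝ) :
    dotp w (a • u - b • u') = a * dotp w u - b * dotp w u' := by
  simp only [dotp, Pi.sub_apply, Pi.smul_apply, smul_eq_mul, mul_sub, Finset.sum_sub_distrib,
    Finset.mul_sum]
  congr 1 <;> [skip; skip] <;> · apply Finset.sum_congr rfl; intro i _; ring

/-- Farkas' lemma, algebraic form, by induction on the number of generators. -/
lemma farkas (d : ℕ) : ∀ (N : ℕ) (w : Fin N → Fin d → ℝ) (c : Fin d → ℝ),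
    (∃ μ : Fin N → ℝ, (∀ i, 0 ≤ μ i) ∧ c = ∑ i, μ i • w i) ∨
    (∃ v : Fin d → ℝ, (∀ i, dotp (w i) v ≤ 0) ∧ 0 < dotp c v) := by
  intro N
  induction N with
  | zero =>
    intro w c
    by_cases hc : c = 0
    · exact Or.inl ⟨0, fun i => le_rfl, by simp [hc]⟩
    · exact Or.inr ⟨c, fun i => i.elim0, dotp_self_pos hc⟩
  | succ N ih =>
    intro w c
    rcases ih (fun i => w i.castSucc) c with ⟨μ, hμ, hc⟩ | ⟨v, hv, hcv⟩
    · refine Or.inl ⟨Fin.snoc μ 0, ?_, ?_⟩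
      · intro i
        refine Fin.lastCases ?_ ?_ i <;> simp [Fin.snoc_castSucc, hμ]
      · rw [Fin.sum_univ_castSucc]
        simp [Fin.snoc_castSucc, hc]
    · by_cases hN : dotp (w (Fin.last N)) v ≤ 0
      · refine Or.inr ⟨v, ?_, hcv⟩
        intro i
        refine Fin.lastCases hN hv i
      · push_neg at hN
        set β := dotp (w (Fin.last N)) v with hβdef
        set W : Fin N → Fin d → ℝ :=
          fun i => β • w i.castSucc - dotp (w i.castSucc) v • w (Fin.last N) with hW
        set C : Fin d → ℝ := β • c - dotp c v • w (Fin.last N) with hC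
        rcases ih W C with ⟨μ, hμ, hCeq⟩ | ⟨v', hv', hCv'⟩
        · -- c is in the cone
          set γ : ℝ := (dotp c v - ∑ i, μ i * dotp (w i.castSucc) v) / β with hγ
          have hγ0 : 0 ≤ γ := by
            apply div_nonneg _ (le_of_lt hN)
            have h1 : 0 ≤ ∑ i, (- (μ i * dotp (w i.castSucc) v)) := by
              apply Finset.sum_nonneg
              intro i _
              have := mul_nonpos_of_nonneg_of_nonpos (hμ i) (hv i)
              linarith
            rw [Finset.sum_neg_distrib] at h1
            linarith
          refine Or.inl ⟨Fin.snoc μ γ, ?_, ?_⟩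
          · intro i
            refine Fin.lastCases ?_ ?_ i <;> simp [Fin.snoc_castSucc, hμ, hγ0]
          · -- c = ∑ μ i • w i.castSucc + γ • w last
            have hβne : β ≠ 0 := ne_of_gt hN
            rw [Fin.sum_univ_castSucc]
            simp only [Fin.snoc_castSucc, Fin.snoc_last]
            -- from hCeq
            have expand : C = β • (∑ i, μ i • w i.castSucc)
                - (∑ i, μ i * dotp (w i.castSucc) v) • w (Fin.last N) := by
              rw [hCeq]
              rw [Finset.smul_sum, Finset.sum_smul]
              rw [← Finset.sum_sub_distrib]
              apply Finset.sum_congr rfl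
              intro i _
              simp only [hW, smul_sub, smul_smul]
              ring_nf
            have : β • c = β • ((∑ i, μ i • w i.castSucc) + γ • w (Fin.last N)) := by
              rw [smul_add, hγ, smul_smul, mul_div_cancel₀ _ hβne, sub_smul]
              have hc2 : β • c - dotp c v • w (Fin.last N) = β • (∑ i, μ i • w i.castSucc)
                - (∑ i, μ i * dotp (w i.castSucc) v) • w (Fin.last N) := by
                rw [← hC]; exact expand
              abel_nf
              abel_nf at hc2
              linear_combination (norm := module) hc2
            exact smul_right_injective _ hβne this
        · -- separating functional
          refine Or.inr ⟨β • v' - dotp (w (Fin.last N)) v' • v, ?_, ?_⟩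
          · intro i
            refine Fin.lastCases ?_ ?_ i
            · rw [dotp_sub_right]; linarith [mul_comm β (dotp (w (Fin.last N)) v')]
            · intro i
              have := hv' i
              rw [hW] at this
              rw [dotp_sub_right]
              rw [dotp_smul_sub] at this
              -- this : β * dotp (w i.castSucc) v' - dotp (w i.castSucc) v * dotp (w last) v' ≤ 0
              -- goal : β * dotp (w i.castSucc) v' - dotp (w last) v' * dotp (w i.castSucc) v ≤ 0
              linarith [this]
          · have := hCv'
            rw [hC, dotp_smul_sub] at this
            rw [dotp_sub_right]
            linarith [this]

/-- Per-index alternative from Farkas: for a skew matrix `a` and index `k₀`, there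
is a nonnegative vector `x` with `a x ≥ 0` and `x k₀ > 0 ∨ (a x) k₀ > 0`. -/
lemma tucker_aux (d : ℕ) (a : Fin d → Fin d → ℝ) (hskew : ∀ i j, a i j + a j i = 0)
    (k₀ : Fin d) :
    ∃ x : Fin d → ℝ, (∀ k, 0 ≤ x k) ∧ (∀ k, 0 ≤ ∑ j, a k j * x j) ∧
      (0 < x k₀ ∨ 0 < ∑ j, a k₀ j * x j) := by
  classical
  set w : Fin (d + d) → Fin d → ℝ :=
    Fin.addCases (fun i => fun j => a i j) (fun i => Pi.single i 1) with hw
  set c : Fin d → ℝ := -Pi.single k₀ 1 with hcdef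
  have hsing : ∀ k : Fin d, (Pi.single k₀ (1:ℝ) : Fin d → ℝ) k = if k = k₀ then 1 else 0 := by
    intro k; rw [Pi.single_apply]
  rcases farkas d (d + d) w c with ⟨μ, hμ, hc⟩ | ⟨v, hv, hcv⟩
  · -- cone case: get lam with A lam ≥ e_{k₀} + rho
    set lam : Fin d → ℝ := fun i => μ (Fin.castAdd d i) with hlam
    set rho : Fin d → ℝ := fun i => μ (Fin.natAdd d i) with hrho
    have key : ∀ j, c j = (∑ i, lam i * a i j) + rho j := by
      intro j
      rw [congrFun hc j, Finset.sum_apply, Fin.sum_univ_add]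
      simp only [hw, Fin.addCases_left, Fin.addCases_right, Pi.smul_apply, smul_eq_mul]
      congr 1
      rw [Finset.sum_eq_single j]
      · simp [hrho]
      · intro i _ hij
        simp [Pi.single_apply, Ne.symm hij]
      · intro h; exact absurd (Finset.mem_univ j) h
    have main : ∀ k, ∑ j, a k j * lam j = rho k - c k := by
      intro k
      have h1 : ∑ j, a k j * lam j = -(∑ i, lam i * a i k) := by
        rw [← Finset.sum_neg_distrib]
        exact Finset.sum_congr rfl (fun i _ => by linear_combination lam i * hskew k i)
      have h2 := key k
      rw [h1]; linarith
    refine ⟨lam, fun k => hμ _, ?_, ?_⟩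
    · intro k
      rw [main k, hcdef]
      have h3 : (-Pi.single k₀ 1 : Fin d → ℝ) k = -(if k = k₀ then (1:ℝ) else 0) := by
        rw [Pi.neg_apply, hsing]
      rw [h3]
      have h4 : 0 ≤ rho k := hμ (Fin.natAdd d k)
      rcases eq_or_ne k k₀ with h | h
      · rw [if_pos h]; linarith
      · rw [if_neg h]; linarith
    · right
      rw [main k₀, hcdef]
      have h3 : (-Pi.single k₀ 1 : Fin d → ℝ) k₀ = -1 := by
        rw [Pi.neg_apply, hsing]; simp
      rw [h3]
      have := hμ (Fin.natAdd d k₀)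
      have : 0 ≤ rho k₀ := this
      linarith
  · -- separating vector case: x = -v works
    have hv2 : ∀ k : Fin d, v k ≤ 0 := by
      intro k
      have := hv (Fin.natAdd d k)
      simp only [hw, Fin.addCases_right] at this
      have hdot : dotp (Pi.single k 1 : Fin d → ℝ) v = v k := by
        rw [dotp, Finset.sum_eq_single k]
        · simp
        · intro i _ hik
          simp [Pi.single_apply, hik]
        · intro h; exact absurd (Finset.mem_univ k) h
      rwa [hdot] at this
    have hv1 : ∀ k : Fin d, ∑ j, a k j * v j ≤ 0 := by
      intro k
      have := hv (Fin.castAdd d k)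
      simp only [hw, Fin.addCases_left] at this
      rwa [dotp] at this
    refine ⟨-v, fun k => by simpa using hv2 k, ?_, ?_⟩
    · intro k
      have : ∑ j, a k j * (-v) j = -(∑ j, a k j * v j) := by
        rw [← Finset.sum_neg_distrib]
        exact Finset.sum_congr rfl (fun j _ => by simp)
      rw [this]
      linarith [hv1 k]
    · left
      rw [hcdef, dotp] at hcv
      have heq : ∑ k, (-Pi.single k₀ 1 : Fin d → ℝ) k * v k = -v k₀ := by
        rw [Finset.sum_eq_single k₀]
        · simp
        · intro i _ hik
          simp [Pi.single_apply, hik]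
        · intro h; exact absurd (Finset.mem_univ k₀) h
      rw [heq] at hcv
      simpa using hcv

/-- Tucker's theorem for skew-symmetric matrices: there is `q` in the simplex with
`a q ≥ 0` and, for each `k`, `q k > 0` or `(a q) k > 0`. -/
lemma tucker (d : ℕ) (hd : 1 ≤ d) (a : Fin d → Fin d → ℝ)
    (hskew : ∀ i j, a i j + a j i = 0) :
    ∃ q : Fin d → ℝ, (∀ k, 0 ≤ q k) ∧ (∑ k, q k = 1) ∧ (∀ k, 0 ≤ ∑ j, a k j * q j) ∧
      (∀ k, 0 < q k ∨ 0 < ∑ j, a k j * q j) := by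
  classical
  choose xs hxs0 hxs1 hxs2 using tucker_aux d a hskew
  set X : Fin d → ℝ := fun j => ∑ k, xs k j with hX
  have hX0 : ∀ j, 0 ≤ X j := fun j => Finset.sum_nonneg (fun k _ => hxs0 k j)
  have hAX : ∀ i, (∑ j, a i j * X j) = ∑ k, ∑ j, a i j * xs k j := by
    intro i
    rw [hX]
    simp only
    rw [Finset.sum_comm]
    apply Finset.sum_congr rfl
    intro j _
    rw [Finset.mul_sum]
  have hAX0 : ∀ i, 0 ≤ ∑ j, a i j * X j := by
    intro i; rw [hAX]
    exact Finset.sum_nonneg (fun k _ => hxs1 k i)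
  have hstrict : ∀ k, 0 < X k ∨ 0 < ∑ j, a k j * X j := by
    intro k
    rcases hxs2 k with h | h
    · left
      calc (0:ℝ) < xs k k := h
        _ ≤ X k := Finset.single_le_sum (fun i _ => hxs0 i k) (Finset.mem_univ k)
    · right
      rw [hAX]
      calc (0:ℝ) < ∑ j, a k j * xs k j := h
        _ ≤ ∑ k', ∑ j, a k j * xs k' j :=
          Finset.single_le_sum (fun k' _ => hxs1 k' k) (Finset.mem_univ k)
  -- total mass positive
  have hs : 0 < ∑ j, X j := by
    rcases (Finset.sum_nonneg (fun j (_ : j ∈ Finset.univ) => hX0 j)).lt_or_eq with h | h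
    · exact h
    · exfalso
      have hz : ∀ j, X j = 0 := by
        intro j
        have := (Finset.sum_eq_zero_iff_of_nonneg (fun j _ => hX0 j)).1 h.symm
        exact this j (Finset.mem_univ j)
      obtain ⟨k⟩ : Nonempty (Fin d) := ⟨⟨0, hd⟩⟩
      rcases hstrict k with h' | h'
      · rw [hz k] at h'; exact lt_irrefl _ h'
      · have : ∑ j, a k j * X j = 0 := by
          apply Finset.sum_eq_zero
          intro j _
          rw [hz j]; ring
        rw [this] at h'; exact lt_irrefl _ h'
  set s := ∑ j, X j with hsdef
  refine ⟨fun j => X j / s, fun j => div_nonneg (hX0 j) hs.le, ?_, ?_, ?_⟩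
  · rw [← Finset.sum_div, ← hsdef, div_self (ne_of_gt hs)]
  · intro k
    have : ∑ j, a k j * (X j / s) = (∑ j, a k j * X j) / s := by
      rw [Finset.sum_div]
      apply Finset.sum_congr rfl
      intro j _; ring
    rw [this]
    exact div_nonneg (hAX0 k) hs.le
  · intro k
    have hrw : ∑ j, a k j * (X j / s) = (∑ j, a k j * X j) / s := by
      rw [Finset.sum_div]
      apply Finset.sum_congr rfl
      intro j _; ring
    rcases hstrict k with h | h
    · exact Or.inl (div_pos h hs)
    · right; rw [hrw]; exact div_pos h hs

/-- The linear coefficient functions of a Volterra QSO. -/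
noncomputable def volC {m : ℕ} (p : Fin m → Fin m → Fin m → ℝ) (z : Fin m → ℝ) :
    Fin m → ℝ :=
  fun k => ∑ j, (if j = k then 1 else 2 * p k j k) * z j

section VolterraStructure

variable {m : ℕ} (p : Fin m → Fin m → Fin m → ℝ)
variable (hsymm : ∀ i j k, p i j k = p j i k)
variable (hnonneg : ∀ i j k, 0 ≤ p i j k)
variable (hsum : ∀ i j, ∑ k, p i j k = 1)
variable (hvol : ∀ i j k, k ≠ i → k ≠ j → p i j k = 0)

include hsymm hnonneg hsum hvol

lemma vol_pkkk (k : Fin m) : p k k k = 1 := by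
  have h := hsum k k
  rwa [Finset.sum_eq_single k (fun l _ hl => hvol k k l hl hl)
    (fun h => absurd (Finset.mem_univ k) h)] at h

/-- two-coefficient identity: `p k j k + p k j j = 1` for `k ≠ j`. -/
lemma vol_pair (k j : Fin m) (hkj : k ≠ j) : p k j k + p k j j = 1 := by
  have h := hsum k j
  have hsub : ({k, j} : Finset (Fin m)) ⊆ Finset.univ := Finset.subset_univ _
  have h2 : ∑ l ∈ ({k, j} : Finset (Fin m)), p k j l = ∑ l, p k j l := by
    apply Finset.sum_subset hsub
    intro l _ hl
    simp only [Finset.mem_insert, Finset.mem_singleton] at hl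
    push_neg at hl
    exact hvol k j l hl.1 hl.2
  rw [Finset.sum_pair hkj] at h2
  linarith [h2.trans h]

/-- Factorisation of a Volterra QSO: `(V z) k = z k * c k (z)`. -/
lemma vol_factor (z : Fin m → ℝ) (k : Fin m) :
    qsoMap p z k = z k * volC p z k := by
  classical
  have hrow : ∀ i, i ≠ k → ∑ j, p i j k * z i * z j = p i k k * z i * z k := by
    intro i hik
    apply Finset.sum_eq_single k
    · intro j _ hjk
      rw [hvol i j k (Ne.symm hik) (Ne.symm hjk)]; ring
    · intro h; exact absurd (Finset.mem_univ k) h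
  have hsplit : qsoMap p z k
      = (∑ i ∈ Finset.univ \ {k}, ∑ j, p i j k * z i * z j) + ∑ j, p k j k * z k * z j := by
    rw [qsoMap]
    exact (Finset.sum_eq_sum_sdiff_singleton_add (Finset.mem_univ k) _)
  rw [hsplit]
  have h1 : ∑ i ∈ Finset.univ \ {k}, ∑ j, p i j k * z i * z j
      = ∑ i ∈ Finset.univ \ {k}, p k i k * z i * z k := by
    apply Finset.sum_congr rfl
    intro i hi
    rw [Finset.mem_sdiff, Finset.mem_singleton] at hi
    rw [hrow i hi.2, hsymm i k k]
  rw [h1]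
  have h2 : z k * volC p z k
      = (∑ j ∈ Finset.univ \ {k}, 2 * p k j k * z j * z k) + z k * z k := by
    rw [volC, Finset.mul_sum]
    rw [Finset.sum_eq_sum_sdiff_singleton_add (Finset.mem_univ k)
      (fun j => z k * ((if j = k then 1 else 2 * p k j k) * z j))]
    congr 1
    · apply Finset.sum_congr rfl
      intro j hj
      rw [Finset.mem_sdiff, Finset.mem_singleton] at hj
      rw [if_neg hj.2]; ring
    · rw [if_pos rfl]; ring
  rw [h2]
  have h3 : ∑ j, p k j k * z k * z j
      = (∑ j ∈ Finset.univ \ {k}, p k j k * z k * z j) + z k * z k := by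
    have e1 := Finset.sum_eq_sum_sdiff_singleton_add (Finset.mem_univ k)
      (fun j => p k j k * z k * z j)
    rw [e1, vol_pkkk p hsymm hnonneg hsum hvol k]
    ring
  rw [h3, ← add_assoc, ← Finset.sum_add_distrib]
  congr 1
  apply Finset.sum_congr rfl
  intro i _; ring

lemma volC_nonneg (z : Fin m → ℝ) (hz : ∀ j, 0 ≤ z j) (k : Fin m) : 0 ≤ volC p z k := by
  apply Finset.sum_nonneg
  intro j _
  apply mul_nonneg _ (hz j)
  by_cases h : j = k
  · simp [h]
  · simp only [if_neg h]
    linarith [hnonneg k j k]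

lemma volC_pos (z : Fin m → ℝ) (hz : ∀ j, 0 < z j) (k : Fin m) : 0 < volC p z k := by
  have h0 : ∀ j ∈ Finset.univ, 0 ≤ (if j = k then (1:ℝ) else 2 * p k j k) * z j := by
    intro j _
    apply mul_nonneg _ (hz j).le
    by_cases h : j = k
    · rw [if_pos h]; norm_num
    · rw [if_neg h]; linarith [hnonneg k j k]
  have hle := Finset.single_le_sum h0 (Finset.mem_univ k)
  rw [if_pos rfl, one_mul] at hle
  exact lt_of_lt_of_le (hz k) hle

/-- The key bilinear identity coming from `b k j + b j k = 2`. -/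
lemma volC_bilin (z w : Fin m → ℝ) :
    (∑ k, w k * volC p z k) + (∑ k, z k * volC p w k)
      = 2 * (∑ k, w k) * (∑ k, z k) := by
  have hb : ∀ k j : Fin m, (if j = k then (1:ℝ) else 2 * p k j k)
      + (if k = j then (1:ℝ) else 2 * p j k j) = 2 := by
    intro k j
    rcases eq_or_ne j k with h | h
    · subst h; norm_num
    · rw [if_neg h, if_neg (Ne.symm h)]
      have := vol_pair p hsymm hnonneg hsum hvol k j (Ne.symm h)
      have h2 : p j k j = p k j j := hsymm j k j
      linarith
  have lhs1 : ∑ k, w k * volC p z k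
      = ∑ k, ∑ j, (if j = k then (1:ℝ) else 2 * p k j k) * w k * z j := by
    apply Finset.sum_congr rfl
    intro k _
    rw [volC, Finset.mul_sum]
    apply Finset.sum_congr rfl
    intro j _; ring
  have lhs2 : ∑ k, z k * volC p w k
      = ∑ k, ∑ j, (if k = j then (1:ℝ) else 2 * p j k j) * w k * z j := by
    rw [Finset.sum_comm]
    apply Finset.sum_congr rfl
    intro k _
    rw [volC, Finset.mul_sum]
    apply Finset.sum_congr rfl
    intro j _
    ring
  rw [lhs1, lhs2, ← Finset.sum_add_distrib]
  have : ∀ k ∈ Finset.univ, (∑ j, (if j = k then (1:ℝ) else 2 * p k j k) * w k * z j)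
      + (∑ j, (if k = j then (1:ℝ) else 2 * p j k j) * w k * z j)
      = w k * (2 * ∑ j, z j) := by
    intro k _
    rw [← Finset.sum_add_distrib, Finset.mul_sum, Finset.mul_sum]
    apply Finset.sum_congr rfl
    intro j _
    linear_combination (w k * z j) * hb k j
  rw [Finset.sum_congr rfl this]
  rw [← Finset.sum_mul]
  ring

/-- Simplex invariance. -/
lemma vol_simplex (z : Fin m → ℝ) (hz : z ∈ stdSimplex ℝ (Fin m)) :
    qsoMap p z ∈ stdSimplex ℝ (Fin m) := by
  constructor
  · intro k
    rw [vol_factor p hsymm hnonneg hsum hvol]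
    exact mul_nonneg (hz.1 k) (volC_nonneg p hsymm hnonneg hsum hvol z hz.1 k)
  · have := volC_bilin p hsymm hnonneg hsum hvol z z
    rw [hz.2] at this
    have h2 : ∑ k, qsoMap p z k = ∑ k, z k * volC p z k :=
      Finset.sum_congr rfl (fun k _ => vol_factor p hsymm hnonneg hsum hvol z k)
    rw [h2]
    nlinarith [this]

end VolterraStructure


/-- `b k j + b j k = 2` for the Volterra coefficients. -/
lemma vol_b_add {m : ℕ} (p : Fin m → Fin m → Fin m → ℝ)
    (hsymm : ∀ i j k, p i j k = p j i k)
    (hsum : ∀ i j, ∑ k, p i j k = 1)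
    (hvol : ∀ i j k, k ≠ i → k ≠ j → p i j k = 0)
    (k j : Fin m) :
    (if j = k then (1:ℝ) else 2 * p k j k) + (if k = j then (1:ℝ) else 2 * p j k j) = 2 := by
  rcases eq_or_ne j k with h | h
  · subst h; norm_num
  · rw [if_neg h, if_neg (Ne.symm h)]
    have h1 := hsum k j
    have hpair : p k j k + p k j j = 1 := by
      have hsub : ({k, j} : Finset (Fin m)) ⊆ Finset.univ := Finset.subset_univ _
      have h2 : ∑ l ∈ ({k, j} : Finset (Fin m)), p k j l = ∑ l, p k j l := by
        apply Finset.sum_subset hsub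
        intro l _ hl
        simp only [Finset.mem_insert, Finset.mem_singleton] at hl
        push_neg at hl
        exact hvol k j l hl.1 hl.2
      rw [Finset.sum_pair (Ne.symm h)] at h2
      linarith [h2.trans h1]
    have h2 : p j k j = p k j j := hsymm j k j
    linarith

/-- Gibbs' inequality. -/
lemma gibbs_ineq {d : ℕ} (y z : Fin d → ℝ) (hys : ∑ k, y k = 1) (hzs : ∑ k, z k = 1)
    (hypos : ∀ k, 0 < y k) (hzpos : ∀ k, 0 < z k) :
    (-∑ k, y k * Real.log (y k)) ≤ -∑ k, y k * Real.log (z k) := by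
  have key : ∀ k, y k * Real.log (z k) - y k * Real.log (y k) ≤ z k - y k := by
    intro k
    have h1 : Real.log (z k / y k) ≤ z k / y k - 1 :=
      Real.log_le_sub_one_of_pos (div_pos (hzpos k) (hypos k))
    rw [Real.log_div (ne_of_gt (hzpos k)) (ne_of_gt (hypos k))] at h1
    have h2 := mul_le_mul_of_nonneg_left h1 (hypos k).le
    have hy0 : y k ≠ 0 := ne_of_gt (hypos k)
    have h3 : y k * (z k / y k - 1) = z k - y k := by field_simp
    calc y k * Real.log (z k) - y k * Real.log (y k)
        = y k * (Real.log (z k) - Real.log (y k)) := by ring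
      _ ≤ y k * (z k / y k - 1) := h2
      _ = z k - y k := h3
  have hs := Finset.sum_le_sum (fun k (_ : k ∈ Finset.univ) => key k)
  rw [Finset.sum_sub_distrib, Finset.sum_sub_distrib, hys, hzs] at hs
  linarith

/-- Equality case extraction. -/
lemma sum_qlog_eq_zero {d : ℕ} (q t : Fin d → ℝ) (hq : ∀ k, 0 ≤ q k) (ht : ∀ k, 0 < t k)
    (h1 : ∑ k, q k * (t k - 1) = 0) (h2 : ∑ k, q k * Real.log (t k) = 0) :
    ∀ k, 0 < q k → t k = 1 := by
  have hterm : ∀ k ∈ Finset.univ, 0 ≤ q k * (t k - 1 - Real.log (t k)) := fun k _ =>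
    mul_nonneg (hq k) (by linarith [Real.log_le_sub_one_of_pos (ht k)])
  have hsum : ∑ k, q k * (t k - 1 - Real.log (t k)) = 0 := by
    have e : ∀ k, q k * (t k - 1 - Real.log (t k))
        = q k * (t k - 1) - q k * Real.log (t k) := fun k => by ring
    rw [Finset.sum_congr rfl fun k _ => e k, Finset.sum_sub_distrib, h1, h2]; ring
  intro k hk
  have hk0 := (Finset.sum_eq_zero_iff_of_nonneg hterm).1 hsum k (Finset.mem_univ k)
  have hz : t k - 1 - Real.log (t k) = 0 := by
    rcases mul_eq_zero.1 hk0 with h | h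
    · exact absurd h (ne_of_gt hk)
    · exact h
  by_contra hne
  have := Real.log_lt_sub_one_of_pos (ht k) hne
  linarith

section VolterraEntropy

variable {m : ℕ} (p : Fin m → Fin m → Fin m → ℝ)
variable (hsymm : ∀ i j k, p i j k = p j i k)
variable (hnonneg : ∀ i j k, 0 ≤ p i j k)
variable (hsum : ∀ i j, ∑ k, p i j k = 1)
variable (hvol : ∀ i j k, k ≠ i → k ≠ j → p i j k = 0)

include hsymm hnonneg hsum hvol

set_option linter.unusedSectionVars false

/-- Entropy step identity. -/
lemma vol_F_step (w z : Fin m → ℝ) (hz : ∀ k, 0 < z k) :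
    (-∑ k, w k * Real.log (qsoMap p z k))
      = (-∑ k, w k * Real.log (z k)) + (-∑ k, w k * Real.log (volC p z k)) := by
  have h : ∀ k, Real.log (qsoMap p z k) = Real.log (z k) + Real.log (volC p z k) := by
    intro k
    rw [vol_factor p hsymm hnonneg hsum hvol z k,
      Real.log_mul (ne_of_gt (hz k)) (ne_of_gt (volC_pos p hsymm hnonneg hsum hvol z hz k))]
  have h2 : ∑ k, w k * Real.log (qsoMap p z k)
      = ∑ k, (w k * Real.log (z k) + w k * Real.log (volC p z k)) :=
    Finset.sum_congr rfl (fun k _ => by rw [h k]; ring)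
  rw [h2, Finset.sum_add_distrib]; ring

/-- The basic Lyapunov inequality. -/
lemma vol_g_nonneg (q z : Fin m → ℝ) (hqS : q ∈ stdSimplex ℝ (Fin m))
    (hzS : z ∈ stdSimplex ℝ (Fin m)) (hzpos : ∀ k, 0 < z k)
    (hq1 : ∀ k, 1 ≤ volC p q k) :
    (0 ≤ ∑ k, z k * (volC p q k - 1)) ∧
      (∑ k, z k * (volC p q k - 1) ≤ -∑ k, q k * Real.log (volC p z k)) := by
  constructor
  · exact Finset.sum_nonneg fun k _ => mul_nonneg (hzS.1 k) (by linarith [hq1 k])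
  · have hsum1 : ∑ k, q k * Real.log (volC p z k) ≤ ∑ k, q k * (volC p z k - 1) :=
      Finset.sum_le_sum (fun k _ => mul_le_mul_of_nonneg_left
        (Real.log_le_sub_one_of_pos (volC_pos p hsymm hnonneg hsum hvol z hzpos k)) (hqS.1 k))
    have hb := volC_bilin p hsymm hnonneg hsum hvol z q
    rw [hqS.2, hzS.2] at hb
    have e1 : ∑ k, q k * (volC p z k - 1) = (∑ k, q k * volC p z k) - 1 := by
      have e : ∀ k, q k * (volC p z k - 1) = q k * volC p z k - q k := fun k => by ring
      rw [Finset.sum_congr rfl fun k _ => e k, Finset.sum_sub_distrib, hqS.2]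
    have e2 : ∑ k, z k * (volC p q k - 1) = (∑ k, z k * volC p q k) - 1 := by
      have e : ∀ k, z k * (volC p q k - 1) = z k * volC p q k - z k := fun k => by ring
      rw [Finset.sum_congr rfl fun k _ => e k, Finset.sum_sub_distrib, hzS.2]
    norm_num at hb
    linarith

end VolterraEntropy

/-- If `x ∈ S^{m-1}` is not a fixed point of a Volterra quadratic stochastic
operator `V`, then every accumulation point `y` of the trajectory `(V^n x)` lies on the
boundary of the simplex, i.e. `y_1 ⋯ y_m = 0`. -/
theorem volterra_omega_limit_subset_boundary (m : ℕ) (hm : 1 ≤ m)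
    (p : Fin m → Fin m → Fin m → ℝ)
    (hsymm : ∀ i j k, p i j k = p j i k)
    (hnonneg : ∀ i j k, 0 ≤ p i j k)
    (hsum : ∀ i j, ∑ k, p i j k = 1)
    (hvol : ∀ i j k, k ≠ i → k ≠ j → p i j k = 0)
    (x : Fin m → ℝ) (hx : x ∈ stdSimplex ℝ (Fin m))
    (hfix : qsoMap p x ≠ x)
    (y : Fin m → ℝ) (φ : ℕ → ℕ) (hφ : StrictMono φ)
    (hy : Filter.Tendsto (fun n => (qsoMap p)^[φ n] x) Filter.atTop (nhds y)) :
    ∏ i, y i = 0 := by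
  classical
  by_cases hint : ∀ k, 0 < x k
  case neg =>
    -- boundary case: a zero coordinate stays zero forever
    push_neg at hint
    obtain ⟨k, hk⟩ := hint
    have hxk : x k = 0 := le_antisymm hk (hx.1 k)
    have hzero : ∀ n, (qsoMap p)^[n] x k = 0 := by
      intro n
      induction n with
      | zero => simpa using hxk
      | succ n ihn =>
        rw [Function.iterate_succ_apply', vol_factor p hsymm hnonneg hsum hvol, ihn, zero_mul]
    have h1 : Filter.Tendsto (fun n => (qsoMap p)^[φ n] x k) Filter.atTop (nhds (y k)) :=
      (tendsto_pi_nhds.mp hy) k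
    have h2 : Filter.Tendsto (fun n => (qsoMap p)^[φ n] x k) Filter.atTop (nhds 0) := by
      have : (fun n => (qsoMap p)^[φ n] x k) = fun _ => (0:ℝ) := funext fun n => hzero (φ n)
      rw [this]; exact tendsto_const_nhds
    exact Finset.prod_eq_zero (Finset.mem_univ k) (tendsto_nhds_unique h1 h2)
  case pos =>
    by_contra hprod
    -- trajectory facts
    have hstep : ∀ n, (qsoMap p)^[n+1] x = qsoMap p ((qsoMap p)^[n] x) := fun n =>
      Function.iterate_succ_apply' (qsoMap p) n x
    have hxsS : ∀ n, (qsoMap p)^[n] x ∈ stdSimplex ℝ (Fin m) := by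
      intro n
      induction n with
      | zero => simpa using hx
      | succ n ihn => rw [hstep n]; exact vol_simplex p hsymm hnonneg hsum hvol _ ihn
    have hxspos : ∀ n k, 0 < (qsoMap p)^[n] x k := by
      intro n
      induction n with
      | zero => simpa using hint
      | succ n ihn =>
        intro k
        rw [hstep n, vol_factor p hsymm hnonneg hsum hvol]
        exact mul_pos (ihn k) (volC_pos p hsymm hnonneg hsum hvol _ ihn k)
    -- y is in the simplex and strictly positive
    have hyS : y ∈ stdSimplex ℝ (Fin m) :=
      (isClosed_stdSimplex ℝ (Fin m)).mem_of_tendsto hy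
        (Filter.Eventually.of_forall (fun n => hxsS (φ n)))
    have ypos : ∀ k, 0 < y k := by
      intro k
      rcases (hyS.1 k).lt_or_eq with h | h
      · exact h
      · exact absurd (Finset.prod_eq_zero (Finset.mem_univ k) h.symm) hprod
    have hyk : ∀ k, Filter.Tendsto (fun n => (qsoMap p)^[φ n] x k) Filter.atTop (nhds (y k)) :=
      fun k => (tendsto_pi_nhds.mp hy) k
    -- Tucker's theorem applied to the skew-symmetric matrix of the operator
    set a : Fin m → Fin m → ℝ := fun k j => (if j = k then (1:ℝ) else 2 * p k j k) - 1 with ha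
    have hskewa : ∀ i j, a i j + a j i = 0 := by
      intro i j
      have := vol_b_add p hsymm hsum hvol i j
      simp only [ha]
      linarith
    obtain ⟨q, hq0, hq1sum, hqA, hqstrict⟩ := tucker m hm a hskewa
    have hqS : q ∈ stdSimplex ℝ (Fin m) := ⟨hq0, hq1sum⟩
    have hcq : ∀ k, volC p q k = 1 + ∑ j, a k j * q j := by
      intro k
      rw [volC]
      have e : ∀ j, (if j = k then (1:ℝ) else 2 * p k j k) * q j = a k j * q j + q j :=
        fun j => by simp only [ha]; ring
      rw [Finset.sum_congr rfl fun j _ => e j, Finset.sum_add_distrib, hq1sum]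
      ring
    have hq1 : ∀ k, 1 ≤ volC p q k := fun k => by rw [hcq k]; linarith [hqA k]
    -- first Lyapunov function
    set F : ℕ → ℝ := fun n => -∑ k, q k * Real.log ((qsoMap p)^[n] x k) with hF
    set gq : (Fin m → ℝ) → ℝ := fun z => -∑ k, q k * Real.log (volC p z k) with hgq
    have hFstep : ∀ n, F (n+1) = F n + gq ((qsoMap p)^[n] x) := by
      intro n
      simp only [hF, hgq]
      rw [hstep n]
      exact vol_F_step p hsymm hnonneg hsum hvol q _ (hxspos n)
    have hgqnn : ∀ n, 0 ≤ gq ((qsoMap p)^[n] x) := by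
      intro n
      have h := vol_g_nonneg p hsymm hnonneg hsum hvol q ((qsoMap p)^[n] x) hqS (hxsS n)
        (hxspos n) hq1
      exact le_trans h.1 h.2
    have hFmono : Monotone F := monotone_nat_of_le_succ (fun n => by
      rw [hFstep n]; linarith [hgqnn n])
    -- limits
    have hlogy : ∀ k, Filter.Tendsto (fun n => Real.log ((qsoMap p)^[φ n] x k))
        Filter.atTop (nhds (Real.log (y k))) := fun k =>
      ((Real.continuousAt_log (ne_of_gt (ypos k))).tendsto).comp (hyk k)
    have hFφ : Filter.Tendsto (fun n => F (φ n)) Filter.atTop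
        (nhds (-∑ k, q k * Real.log (y k))) := by
      apply Filter.Tendsto.neg
      exact tendsto_finset_sum _ (fun k _ => (hlogy k).const_mul (q k))
    have hcypos : ∀ k, 0 < volC p y k := volC_pos p hsymm hnonneg hsum hvol y ypos
    have hcyk : ∀ k, Filter.Tendsto (fun n => volC p ((qsoMap p)^[φ n] x) k)
        Filter.atTop (nhds (volC p y k)) := by
      intro k
      simp only [volC]
      exact tendsto_finset_sum _ (fun j _ => (hyk j).const_mul _)
    have hgqconv : Filter.Tendsto (fun n => gq ((qsoMap p)^[φ n] x)) Filter.atTop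
        (nhds (gq y)) := by
      simp only [hgq]
      apply Filter.Tendsto.neg
      exact tendsto_finset_sum _ (fun k _ =>
        (((Real.continuousAt_log (ne_of_gt (hcypos k))).tendsto).comp (hcyk k)).const_mul (q k))
    have hsq : Filter.Tendsto (fun n => F (φ n + 1)) Filter.atTop
        (nhds (-∑ k, q k * Real.log (y k))) := by
      apply tendsto_of_tendsto_of_tendsto_of_le_of_le hFφ
        (hFφ.comp (Filter.tendsto_add_atTop_nat 1))
      · exact fun n => hFmono (Nat.le_succ _)
      · exact fun n => hFmono (Nat.succ_le_of_lt (hφ (Nat.lt_succ_self n)))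
    have hdiff0 : Filter.Tendsto (fun n => F (φ n + 1) - F (φ n)) Filter.atTop (nhds 0) := by
      have := hsq.sub hFφ
      simpa using this
    have hgqy : gq y = 0 := by
      have heq : (fun n => gq ((qsoMap p)^[φ n] x)) = fun n => F (φ n + 1) - F (φ n) :=
        funext fun n => by rw [hFstep (φ n)]; ring
      rw [heq] at hgqconv
      exact tendsto_nhds_unique hgqconv hdiff0
    -- conclude `volC p q ≡ 1`, hence `q` is interior
    have hSC := vol_g_nonneg p hsymm hnonneg hsum hvol q y hqS hyS ypos hq1
    have hgqy' : -∑ k, q k * Real.log (volC p y k) = 0 := by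
      simp only [hgq] at hgqy
      exact hgqy
    have hSCzero : ∑ k, y k * (volC p q k - 1) = 0 := by
      linarith [hSC.1, hSC.2, hgqy']
    have hcq1 : ∀ k, volC p q k = 1 := by
      intro k
      have hterm := (Finset.sum_eq_zero_iff_of_nonneg
        (fun k _ => mul_nonneg (hyS.1 k) (by linarith [hq1 k]))).1 hSCzero k (Finset.mem_univ k)
      rcases mul_eq_zero.1 hterm with h | h
      · exact absurd h (ne_of_gt (ypos k))
      · linarith
    have hqpos : ∀ k, 0 < q k := by
      intro k
      refine (hqstrict k).resolve_right (fun h2 => ?_)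
      have := hcq k
      rw [hcq1 k] at this
      linarith
    -- conclude `volC p y ≡ 1`, i.e. `y` is an interior fixed point
    have hbyq := volC_bilin p hsymm hnonneg hsum hvol y q
    rw [hq1sum, hyS.2] at hbyq
    have hsq1 : ∑ k, y k * volC p q k = 1 := by
      have e : ∀ k, y k * volC p q k = y k := fun k => by rw [hcq1 k]; ring
      rw [Finset.sum_congr rfl fun k _ => e k, hyS.2]
    have hqcy1 : ∑ k, q k * volC p y k = 1 := by norm_num at hbyq; linarith
    have hcy1 : ∀ k, volC p y k = 1 := by
      have h1 : ∑ k, q k * (volC p y k - 1) = 0 := by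
        have e : ∀ k, q k * (volC p y k - 1) = q k * volC p y k - q k := fun k => by ring
        rw [Finset.sum_congr rfl fun k _ => e k, Finset.sum_sub_distrib, hqcy1, hq1sum]
        ring
      have h2 : ∑ k, q k * Real.log (volC p y k) = 0 := by
        linarith [hgqy']
      exact fun k => sum_qlog_eq_zero q (fun k => volC p y k) hq0 hcypos h1 h2 k (hqpos k)
    -- second Lyapunov function, based at `y`
    set G : ℕ → ℝ := fun n => -∑ k, y k * Real.log ((qsoMap p)^[n] x k) with hG
    have hy1 : ∀ k, 1 ≤ volC p y k := fun k => (hcy1 k).ge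
    have hGstep : ∀ n, G (n+1) = G n + (-∑ k, y k * Real.log (volC p ((qsoMap p)^[n] x) k)) := by
      intro n
      simp only [hG]
      rw [hstep n]
      exact vol_F_step p hsymm hnonneg hsum hvol y _ (hxspos n)
    have hGnn : ∀ n, 0 ≤ -∑ k, y k * Real.log (volC p ((qsoMap p)^[n] x) k) := by
      intro n
      have h := vol_g_nonneg p hsymm hnonneg hsum hvol y ((qsoMap p)^[n] x) hyS (hxsS n)
        (hxspos n) hy1
      exact le_trans h.1 h.2
    have hGmono : Monotone G := monotone_nat_of_le_succ (fun n => by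
      rw [hGstep n]; linarith [hGnn n])
    have hGφ : Filter.Tendsto (fun n => G (φ n)) Filter.atTop
        (nhds (-∑ k, y k * Real.log (y k))) := by
      apply Filter.Tendsto.neg
      exact tendsto_finset_sum _ (fun k _ => (hlogy k).const_mul (y k))
    have hGibbs : ∀ n, (-∑ k, y k * Real.log (y k)) ≤ G n := fun n =>
      gibbs_ineq y ((qsoMap p)^[n] x) hyS.2 (hxsS n).2 ypos (hxspos n)
    have hG0 : G 0 = -∑ k, y k * Real.log (y k) := by
      have hle : G 0 ≤ -∑ k, y k * Real.log (y k) :=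
        ge_of_tendsto hGφ (Filter.Eventually.of_forall (fun n => hGmono (Nat.zero_le (φ n))))
      linarith [hGibbs 0]
    have hG1 : G 1 = -∑ k, y k * Real.log (y k) := by
      have hle : G 1 ≤ -∑ k, y k * Real.log (y k) := by
        apply ge_of_tendsto hGφ
        refine Filter.eventually_atTop.2 ⟨1, fun n hn => hGmono (le_trans hn hφ.le_apply)⟩
      linarith [hGibbs 1]
    -- equality forces `volC p x ≡ 1`, contradicting `hfix`
    have hgyx : ∑ k, y k * Real.log (volC p x k) = 0 := by
      have h := hGstep 0
      rw [hG0, hG1] at h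
      simp only [Function.iterate_zero_apply] at h
      linarith
    have hbxy := volC_bilin p hsymm hnonneg hsum hvol x y
    rw [hx.2, hyS.2] at hbxy
    have hxcy1 : ∑ k, x k * volC p y k = 1 := by
      have e : ∀ k, x k * volC p y k = x k := fun k => by rw [hcy1 k]; ring
      rw [Finset.sum_congr rfl fun k _ => e k, hx.2]
    have hycx1 : ∑ k, y k * volC p x k = 1 := by norm_num at hbxy; linarith
    have h1 : ∑ k, y k * (volC p x k - 1) = 0 := by
      have e : ∀ k, y k * (volC p x k - 1) = y k * volC p x k - y k := fun k => by ring
      rw [Finset.sum_congr rfl fun k _ => e k, Finset.sum_sub_distrib, hycx1, hyS.2]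
      ring
    have hcx1 : ∀ k, volC p x k = 1 :=
      fun k => sum_qlog_eq_zero y (fun k => volC p x k) (fun k => (ypos k).le)
        (volC_pos p hsymm hnonneg hsum hvol x hint) h1 hgyx k (ypos k)
    apply hfix
    funext k
    rw [vol_factor p hsymm hnonneg hsum hvol, hcx1 k, mul_one]
end

section
/- Let V_1, …, V_m be Volterra quadratic stochastic operators on S^{m-1} such that (V_k x)_k = x_k^2 for all x ∈ S^{m-1} and all k ∈ {1,…,m}. For every ε > 0 there exists r ∈ ℕ with −2^r + (m−2)r < log(ε)/log(2) such that: for every x ∈ S^{m-1} there exist pairwise distinct indices j_1, …, j_{m-1} ∈ {1,…,m} and an index j_0 ∈ {1,…,m} \ {j_1,…,j_{m-1}} with (V_{j_{m-1}}^r ∘ ⋯ ∘ V_{j_1}^r)(x) ∈ U_ε^{j_0}, where V^r denotes the r-fold iterate. In particular a deterministic composition of r(m−1) operators from {V_1,…,V_m} maps x into U_ε = ∪_{i=1}^m U_ε^i. -/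
section basic
variable {m : ℕ} (q : Fin m → Fin m → Fin m → ℝ)
  (hnn : ∀ i j l, 0 ≤ q i j l) (hs : ∀ i j, ∑ l, q i j l = 1)
  (hv : ∀ i j l, l ≠ i → l ≠ j → q i j l = 0)

include hnn hs in
lemma qso_le_one : ∀ i j l, q i j l ≤ 1 := by
  intro i j l
  calc q i j l ≤ ∑ l', q i j l' := Finset.single_le_sum (fun l' _ => hnn i j l') (Finset.mem_univ l)
  _ = 1 := hs i j

include hnn hs in
lemma qso_mem {x : Fin m → ℝ} (hx : x ∈ stdSimplex ℝ (Fin m)) :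
    qsoMap q x ∈ stdSimplex ℝ (Fin m) := by
  constructor
  · intro k
    apply Finset.sum_nonneg; intro i _
    apply Finset.sum_nonneg; intro j _
    exact mul_nonneg (mul_nonneg (hnn i j k) (hx.1 i)) (hx.1 j)
  · have h : ∑ k, qsoMap q x k = ∑ i, ∑ j, (∑ k, q i j k) * x i * x j := by
      unfold qsoMap
      rw [Finset.sum_comm]
      congr 1; ext i
      rw [Finset.sum_comm]
      congr 1; ext j
      rw [Finset.sum_mul, Finset.sum_mul]
    rw [h]
    have h2 : ∀ i j : Fin m, (∑ k, q i j k) * x i * x j = x i * x j := by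
      intro i j; rw [hs i j, one_mul]
    simp only [h2]
    rw [← Finset.sum_mul_sum]
    rw [hx.2, one_mul]

include hnn hs hv in
lemma qso_le_two {x : Fin m → ℝ} (hx : x ∈ stdSimplex ℝ (Fin m)) (l : Fin m) :
    qsoMap q x l ≤ 2 * x l := by
  have hxn := hx.1
  have hq1 := qso_le_one q hnn hs
  have hb : qsoMap q x l ≤ ∑ i, ∑ j, (if i = l then x l * x j else if j = l then x i * x l else 0) := by
    apply Finset.sum_le_sum; intro i _
    apply Finset.sum_le_sum; intro j _
    by_cases hi : i = l
    · rw [if_pos hi]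
      calc q i j l * x i * x j ≤ 1 * x i * x j := by
            have := hxn i; have := hxn j
            gcongr; exact hq1 i j l
      _ = x l * x j := by rw [← hi]; ring
    · rw [if_neg hi]
      by_cases hj : j = l
      · rw [if_pos hj]
        calc q i j l * x i * x j ≤ 1 * x i * x j := by
              have := hxn i; have := hxn j
              gcongr; exact hq1 i j l
        _ = x i * x l := by rw [← hj]; ring
      · rw [if_neg hj, hv i j l (Ne.symm hi) (Ne.symm hj)]
        ring_nf
        exact le_refl 0
  refine hb.trans ?_
  have h1 : ∀ i : Fin m, ∑ j, (if i = l then x l * x j else if j = l then x i * x l else 0)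
      = if i = l then x l * (∑ j, x j) else x i * x l := by
    intro i
    by_cases hi : i = l
    · simp only [if_pos hi, ← Finset.mul_sum]
    · simp only [if_neg hi]
      rw [Finset.sum_ite_eq' Finset.univ l (fun _ => x i * x l), if_pos (Finset.mem_univ l)]
  rw [Finset.sum_congr rfl (fun i _ => h1 i)]
  rw [← Finset.add_sum_erase _ _ (Finset.mem_univ l), if_pos rfl, hx.2, mul_one]
  have h2 : ∑ i ∈ Finset.univ.erase l, (if i = l then x l else x i * x l)
      = (∑ i ∈ Finset.univ.erase l, x i) * x l := by
    rw [Finset.sum_mul]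
    apply Finset.sum_congr rfl
    intro i hi
    rw [if_neg (Finset.ne_of_mem_erase hi)]
  rw [h2]
  have h3 : ∑ i ∈ Finset.univ.erase l, x i ≤ 1 := by
    rw [← hx.2]
    apply Finset.sum_le_sum_of_subset_of_nonneg (Finset.subset_univ _)
    intro i _ _; exact hxn i
  nlinarith [hxn l]
end basic


section aux

lemma exists_r_aux (a C : ℝ) : ∃ r : ℕ, -(2:ℝ)^r + a * r < C := by
  set k : ℕ := ⌈2*a⌉₊ with hk
  set n : ℕ := ⌈-C⌉₊ + 1 with hn
  have hka : 2*a ≤ k := Nat.le_ceil _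
  have hnC : -C < n := by
    have := Nat.le_ceil (-C)
    push_cast [hn]
    linarith
  set s : ℕ := max k n with hs
  refine ⟨2*s, ?_⟩
  have hnat : k*s + n ≤ 2^(2*s) := by
    have h1 : s + 1 ≤ 2^s := Nat.lt_two_pow_self (n := s)
    have hks : k ≤ s := le_max_left _ _
    have hns : n ≤ s := le_max_right _ _
    calc k*s + n ≤ s*s + s := by nlinarith
    _ = s*(s+1) := by ring
    _ ≤ (s+1)*(s+1) := by nlinarith
    _ ≤ 2^s * 2^s := Nat.mul_le_mul h1 h1
    _ = 2^(2*s) := by rw [two_mul, pow_add]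
  have hnat' : (k:ℝ)*s + n ≤ 2^(2*s) := by
    have := (Nat.cast_le (α := ℝ)).mpr hnat
    push_cast at this
    push_cast
    linarith
  have h2 : a * (2*s : ℕ) ≤ (k:ℝ) * s := by
    push_cast
    calc a * (2*(s:ℝ)) = (2*a) * s := by ring
    _ ≤ (k:ℝ) * s := by
        apply mul_le_mul_of_nonneg_right hka (by positivity)
  nlinarith

lemma snoc_injective {m n : ℕ} {js : Fin n → Fin m} {j : Fin m}
    (hinj : Function.Injective js) (hj : j ∉ Set.range js) :
    Function.Injective (Fin.snoc js j) := by
  intro a b hab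
  rcases Fin.eq_castSucc_or_eq_last a with ⟨a', rfl⟩ | rfl <;>
    rcases Fin.eq_castSucc_or_eq_last b with ⟨b', rfl⟩ | rfl
  · simp only [Fin.snoc_castSucc] at hab
    exact congrArg Fin.castSucc (hinj hab)
  · simp only [Fin.snoc_castSucc, Fin.snoc_last] at hab
    exact absurd ⟨a', hab⟩ hj
  · simp only [Fin.snoc_castSucc, Fin.snoc_last] at hab
    exact absurd ⟨b', hab.symm⟩ hj
  · rfl

lemma pigeonhole_half {m : ℕ} {x : Fin m → ℝ} (hx : x ∈ stdSimplex ℝ (Fin m))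
    {T : Finset (Fin m)} (hT : 2 ≤ T.card) : ∃ j ∈ T, x j ≤ 1/2 := by
  by_contra h
  push_neg at h
  have hne : T.Nonempty := Finset.card_pos.mp (by omega)
  have h1 : ∑ j ∈ T, (1/2 : ℝ) < ∑ j ∈ T, x j :=
    Finset.sum_lt_sum_of_nonempty hne h
  have h2 : ∑ j ∈ T, x j ≤ 1 := by
    rw [← hx.2]
    exact Finset.sum_le_sum_of_subset_of_nonneg (Finset.subset_univ _) (fun i _ _ => hx.1 i)
  rw [Finset.sum_const, nsmul_eq_mul] at h1
  have : (2:ℝ) ≤ T.card := by exact_mod_cast hT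
  nlinarith

end aux

section family
variable {m : ℕ} (p : Fin m → Fin m → Fin m → Fin m → ℝ)
  (hnn : ∀ k i j l, 0 ≤ p k i j l) (hs : ∀ k i j, ∑ l, p k i j l = 1)
  (hv : ∀ k i j l, l ≠ i → l ≠ j → p k i j l = 0)
  (hsq : ∀ k : Fin m, ∀ x ∈ stdSimplex ℝ (Fin m), qsoMap (p k) x k = x k ^ 2)

include hnn hs in
lemma iter_mem (k : Fin m) (r : ℕ) {x : Fin m → ℝ} (hx : x ∈ stdSimplex ℝ (Fin m)) :
    (qsoMap (p k))^[r] x ∈ stdSimplex ℝ (Fin m) := by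
  induction r with
  | zero => simpa using hx
  | succ r ih =>
      rw [Function.iterate_succ_apply']
      exact qso_mem (p k) (hnn k) (hs k) ih

include hnn hs hsq in
lemma iter_self (k : Fin m) (r : ℕ) {x : Fin m → ℝ} (hx : x ∈ stdSimplex ℝ (Fin m)) :
    ((qsoMap (p k))^[r] x) k = x k ^ (2^r) := by
  induction r with
  | zero => simp
  | succ r ih =>
      rw [Function.iterate_succ_apply', hsq k _ (iter_mem p hnn hs k r hx), ih,
        ← pow_mul, pow_succ]

include hnn hs hv in
lemma iter_le (k : Fin m) (r : ℕ) {x : Fin m → ℝ} (hx : x ∈ stdSimplex ℝ (Fin m)) (l : Fin m) :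
    ((qsoMap (p k))^[r] x) l ≤ 2^r * x l := by
  induction r with
  | zero => simp
  | succ r ih =>
      rw [Function.iterate_succ_apply']
      calc qsoMap (p k) ((qsoMap (p k))^[r] x) l ≤ 2 * ((qsoMap (p k))^[r] x) l :=
            qso_le_two (p k) (hnn k) (hs k) (hv k) (iter_mem p hnn hs k r hx) l
      _ ≤ 2 * (2^r * x l) := by linarith
      _ = 2^(r+1) * x l := by ring

include hnn hs hv hsq in
lemma main_ind (r : ℕ) (n : ℕ) (hnm : n + 1 ≤ m) {x : Fin m → ℝ}
    (hx : x ∈ stdSimplex ℝ (Fin m)) :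
    ∃ js : Fin n → Fin m, Function.Injective js ∧
      ((List.ofFn js).foldl (fun y j => (qsoMap (p j))^[r] y) x ∈ stdSimplex ℝ (Fin m) ∧
       ∀ t : Fin n, ((List.ofFn js).foldl (fun y j => (qsoMap (p j))^[r] y) x) (js t)
          ≤ (1/2:ℝ)^(2^r) * 2^(r*(n-1-t.val))) := by
  induction n with
  | zero =>
      refine ⟨Fin.elim0, fun a => a.elim0, ?_, fun t => t.elim0⟩
      simpa using hx
  | succ n ih =>
      obtain ⟨js, hinj, hmem, hbd⟩ := ih (by omega)
      set y := (List.ofFn js).foldl (fun y j => (qsoMap (p j))^[r] y) x with hy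
      -- complement of range has card ≥ 2
      have hcard : 2 ≤ (Finset.univ \ Finset.image js Finset.univ).card := by
        have h1 : (Finset.image js Finset.univ).card = n := by
          rw [Finset.card_image_of_injective _ hinj, Finset.card_univ, Fintype.card_fin]
        have := Finset.card_sdiff_of_subset (Finset.subset_univ (Finset.image js Finset.univ))
        rw [this, h1, Finset.card_univ, Fintype.card_fin]
        omega
      obtain ⟨j, hjmem, hjhalf⟩ := pigeonhole_half hmem hcard
      have hjrange : j ∉ Set.range js := by
        rw [Finset.mem_sdiff] at hjmem
        intro ⟨t, ht⟩
        exact hjmem.2 (Finset.mem_image.mpr ⟨t, Finset.mem_univ t, ht⟩)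
      refine ⟨Fin.snoc js j, snoc_injective hinj hjrange, ?_, ?_⟩
      all_goals
        have hofn : List.ofFn (Fin.snoc js j : Fin (n+1) → Fin m) = List.ofFn js ++ [j] := by
          rw [List.ofFn_succ']
          simp [Fin.snoc_castSucc, Fin.snoc_last, List.concat_eq_append]
      · rw [hofn, List.foldl_append]
        exact iter_mem p hnn hs j r hmem
      · intro t
        rw [hofn, List.foldl_append]
        simp only [List.foldl_cons, List.foldl_nil, ← hy]
        rcases Fin.eq_castSucc_or_eq_last t with ⟨t', rfl⟩ | rfl
        · rw [Fin.snoc_castSucc]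
          calc ((qsoMap (p j))^[r] y) (js t') ≤ 2^r * y (js t') :=
                iter_le p hnn hs hv j r hmem (js t')
          _ ≤ 2^r * ((1/2:ℝ)^(2^r) * 2^(r*(n-1-t'.val))) := by
                have := hbd t'
                have h2 : (0:ℝ) ≤ 2^r := by positivity
                nlinarith [hbd t']
          _ = (1/2:ℝ)^(2^r) * 2^(r*(n+1-1-(Fin.castSucc t').val)) := by
                have ht' : t'.val < n := t'.isLt
                have : r*(n+1-1-(Fin.castSucc t').val) = r*(n-1-t'.val) + r := by
                  simp only [Fin.coe_castSucc]
                  have : n+1-1-t'.val = (n-1-t'.val) + 1 := by omega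
                  rw [this]; ring
                rw [this, pow_add]; ring
        · rw [Fin.snoc_last]
          have hself := iter_self p hnn hs hsq j r hmem
          rw [hself]
          have h0 : (0:ℝ) ≤ y j := hmem.1 j
          calc y j ^ (2^r) ≤ (1/2:ℝ)^(2^r) := by
                apply pow_le_pow_left₀ h0 hjhalf
          _ = (1/2:ℝ)^(2^r) * 2^(r*(n+1-1-(Fin.last n).val)) := by
                simp [Fin.val_last]
end family


lemma bound_lt_eps (m r : ℕ) (hm : 2 ≤ m) {ε : ℝ} (hε : 0 < ε)
    (h : -(2:ℝ)^r + ((m:ℝ)-2)*r < Real.log ε / Real.log 2) :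
    (1/2:ℝ)^(2^r) * 2^(r*(m-2)) < ε := by
  have hlog2 : 0 < Real.log 2 := Real.log_pos (by norm_num)
  have h2 : (-(2:ℝ)^r + ((m:ℝ)-2)*r) * Real.log 2 < Real.log ε :=
    (lt_div_iff₀ hlog2).mp h
  have e1 : (2:ℝ)^(r*(m-2)) = Real.exp (Real.log 2 * ((r*(m-2) : ℕ) : ℝ)) := by
    rw [← Real.rpow_natCast 2 (r*(m-2)), Real.rpow_def_of_pos (by norm_num)]
  have e2 : (1/2:ℝ)^(2^r) = Real.exp (-(Real.log 2 * (((2:ℕ)^r : ℕ) : ℝ))) := by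
    rw [one_div, inv_pow, ← Real.rpow_natCast 2 (2^r), Real.rpow_def_of_pos (by norm_num),
      ← Real.exp_neg]
  have key : (1/2:ℝ)^(2^r) * 2^(r*(m-2))
      = Real.exp ((-(2:ℝ)^r + ((m:ℝ)-2)*r) * Real.log 2) := by
    rw [e1, e2, ← Real.exp_add]
    congr 1
    push_cast [Nat.cast_sub hm]
    ring
  rw [key, ← Real.exp_log hε]
  exact Real.exp_lt_exp.mpr h2


/-- Given Volterra QSOs `V_1, …, V_m` with `(V_k x)_k = x_k^2`, for every
`ε > 0` there is `r ∈ ℕ` with `-2^r + (m-2) r < log ε / log 2` such that from any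
`x ∈ S^{m-1}` a deterministic composition `V_{j_{m-1}}^r ∘ ⋯ ∘ V_{j_1}^r` with pairwise
distinct indices maps `x` into the `ε`-neighbourhood `U_ε^{j_0}` of some vertex
`e_{j_0}` with `j_0 ∉ {j_1, …, j_{m-1}}`. -/
theorem deterministic_composition_reaches_vertex_nbhd (m : ℕ) (hm : 2 ≤ m)
    (p : Fin m → Fin m → Fin m → Fin m → ℝ)
    (hsymm : ∀ k i j l, p k i j l = p k j i l)
    (hnonneg : ∀ k i j l, 0 ≤ p k i j l)
    (hsum : ∀ k i j, ∑ l, p k i j l = 1)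
    (hvol : ∀ k i j l, l ≠ i → l ≠ j → p k i j l = 0)
    (hsq : ∀ k : Fin m, ∀ x ∈ stdSimplex ℝ (Fin m), qsoMap (p k) x k = x k ^ 2)
    (ε : ℝ) (hε : 0 < ε) :
    ∃ r : ℕ, (-(2:ℝ) ^ r + ((m : ℝ) - 2) * r < Real.log ε / Real.log 2) ∧
      ∀ x ∈ stdSimplex ℝ (Fin m),
        ∃ js : Fin (m - 1) → Fin m, Function.Injective js ∧
        ∃ j₀ : Fin m, j₀ ∉ Set.range js ∧
          (((List.ofFn js).foldl (fun y j => (qsoMap (p j))^[r] y) x)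
              ∈ stdSimplex ℝ (Fin m) ∧
           ∀ i : Fin m, i ≠ j₀ →
            ((List.ofFn js).foldl (fun y j => (qsoMap (p j))^[r] y) x) i < ε) := by
  obtain ⟨r, hr⟩ := exists_r_aux ((m:ℝ)-2) (Real.log ε / Real.log 2)
  refine ⟨r, hr, ?_⟩
  intro x hx
  obtain ⟨js, hinj, hmem, hbd⟩ := main_ind p hnonneg hsum hvol hsq r (m-1) (by omega) hx
  refine ⟨js, hinj, ?_⟩
  have hcardI : (Finset.image js Finset.univ).card = m - 1 := by
    rw [Finset.card_image_of_injective _ hinj, Finset.card_univ, Fintype.card_fin]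
  have hcompl : (Finset.univ \ Finset.image js Finset.univ).card = 1 := by
    rw [Finset.card_sdiff_of_subset (Finset.subset_univ _), hcardI, Finset.card_univ,
      Fintype.card_fin]
    omega
  obtain ⟨j₀, hj₀⟩ := Finset.card_pos.mp (by omega : 0 < (Finset.univ \ Finset.image js Finset.univ).card)
  refine ⟨j₀, ?_, hmem, ?_⟩
  · rintro ⟨t, ht⟩
    rw [Finset.mem_sdiff] at hj₀
    exact hj₀.2 (Finset.mem_image.mpr ⟨t, Finset.mem_univ t, ht⟩)
  · intro i hi
    have hir : i ∈ Set.range js := by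
      by_contra hir
      have hic : i ∈ Finset.univ \ Finset.image js Finset.univ := by
        rw [Finset.mem_sdiff]
        refine ⟨Finset.mem_univ i, fun him => hir ?_⟩
        obtain ⟨t, _, ht⟩ := Finset.mem_image.mp him
        exact ⟨t, ht⟩
      exact hi (Finset.card_le_one.mp (le_of_eq hcompl) i hic j₀ hj₀)
    obtain ⟨t, rfl⟩ := hir
    calc ((List.ofFn js).foldl (fun y j => (qsoMap (p j))^[r] y) x) (js t)
        ≤ (1/2:ℝ)^(2^r) * 2^(r*((m-1)-1-t.val)) := hbd t
    _ ≤ (1/2:ℝ)^(2^r) * 2^(r*(m-2)) := by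
        have hle : r*((m-1)-1-t.val) ≤ r*(m-2) := Nat.mul_le_mul_left _ (by omega)
        have hp := pow_le_pow_right₀ (by norm_num : (1:ℝ) ≤ 2) hle
        have h12 : (0:ℝ) ≤ (1/2:ℝ)^(2^r) := by positivity
        nlinarith
    _ < ε := bound_lt_eps m r hm hε hr
end

section
/- Let (h_i)_{i≥1} be real random variables adapted to a filtration (ℱ_i)_{i≥0} with 𝔼[h_{i+1} | ℱ_i] = 0, 𝔼[h_i^2 | ℱ_0] ≤ B for some B > 0, and 𝔼[h_i h_j | ℱ_0] = 0 a.s. for i ≠ j. Set S_n = ∑_{j=1}^n h_j. Then for any constants c_1 ≥ c_2 ≥ 0 and α_1 > α_2 > 0, ℙ-a.s.: ℙ(∃ n ∈ ℕ : S_n ≤ −c_1 − α_1 n | ℱ_0) ≤ ∑_{n≥1} B n^2 / (c_2 + α_2 n^2)^2 + ∑_{n≥1} B n(2n+1) / ((c_1 − c_2) + (α_1 − α_2) n^2)^2. In particular, for fixed α_1 > 0 the conditional probability ℙ(∃ n : S_n ≤ −c − α_1 n | ℱ_0) can be made smaller than any θ > 0 (a.s.) by choosing c large enough. -/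
open MeasureTheory ProbabilityTheory Filter Topology

section Aux

variable {Ω : Type*} {mΩ : MeasurableSpace Ω} {μ : Measure Ω} [IsProbabilityMeasure μ]
  {ℱ : Filtration ℕ mΩ} {h : ℕ → Ω → ℝ} {B : ℝ}

/-- Conditional Chebyshev bound for increments of the partial sums. -/
lemma ruin_cheb (hB : 0 < B)
    (hadapt : ∀ n, StronglyMeasurable[ℱ (n + 1)] (h n))
    (hL2 : ∀ n, MemLp (h n) 2 μ)
    (hvarbd : ∀ n, ∀ᵐ ω ∂μ, (μ[fun ω' => (h n ω') ^ 2 | ℱ 0]) ω ≤ B)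
    (horth : ∀ i j, i ≠ j → μ[fun ω => h i ω * h j ω | ℱ 0] =ᵐ[μ] 0)
    (a b : ℕ) (t : ℝ) (ht : 0 < t) :
    ∀ᵐ ω ∂μ, (μ[Set.indicator {ω' | (∑ j ∈ Finset.Ico a b, h j ω') ≤ -t}
        (fun _ => (1 : ℝ)) | ℱ 0]) ω ≤ B * ((b - a : ℕ) : ℝ) / t ^ 2 := by
  classical
  have hmeas : ∀ n, Measurable (h n) := fun n => (hadapt n).measurable.mono (ℱ.le _) le_rfl
  set X : Ω → ℝ := fun ω => ∑ j ∈ Finset.Ico a b, h j ω with hXdef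
  have hXmeas : Measurable X := Finset.measurable_sum _ (fun j _ => hmeas j)
  have hXL2 : MemLp X 2 μ := memLp_finset_sum _ (fun j _ => hL2 j)
  have hXsq_int : Integrable (fun ω => X ω ^ 2) μ := hXL2.integrable_sq
  have hprod_int : ∀ p : ℕ × ℕ, Integrable (fun ω => h p.1 ω * h p.2 ω) μ := by
    intro p
    refine Integrable.mono' ((hL2 p.1).integrable_sq.add (hL2 p.2).integrable_sq)
      ((hL2 p.1).aestronglyMeasurable.mul (hL2 p.2).aestronglyMeasurable) ?_
    filter_upwards with ω
    simp only [Pi.add_apply]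
    rw [Real.norm_eq_abs, abs_mul]
    nlinarith [sq_nonneg (|h p.1 ω| - |h p.2 ω|), sq_abs (h p.1 ω), sq_abs (h p.2 ω),
      abs_nonneg (h p.1 ω), abs_nonneg (h p.2 ω)]
  have hexpand : (fun ω => X ω ^ 2)
      = ∑ p ∈ (Finset.Ico a b) ×ˢ (Finset.Ico a b), fun ω => h p.1 ω * h p.2 ω := by
    funext ω
    simp only [Finset.sum_apply]
    rw [hXdef, sq, Finset.sum_mul_sum, ← Finset.sum_product']
  have hsum : μ[fun ω => X ω ^ 2 | ℱ 0]
      =ᵐ[μ] ∑ p ∈ (Finset.Ico a b) ×ˢ (Finset.Ico a b),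
          μ[fun ω => h p.1 ω * h p.2 ω | ℱ 0] := by
    rw [hexpand]
    exact condExp_finsetSum (fun p _ => hprod_int p) (ℱ 0)
  have hae : ∀ᵐ ω ∂μ, ∀ i j : ℕ, (μ[fun ω' => h i ω' * h j ω' | ℱ 0]) ω
      ≤ if i = j then B else 0 := by
    rw [ae_all_iff]
    intro i
    rw [ae_all_iff]
    intro j
    by_cases hij : i = j
    · subst hij
      simp only [if_pos rfl]
      have heq : (fun ω' => h i ω' * h i ω') = fun ω' => h i ω' ^ 2 := by funext ω'; ring
      rw [heq]
      exact hvarbd i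
    · filter_upwards [horth i j hij] with ω hω
      rw [hω]
      simp [hij]
  have hvar : ∀ᵐ ω ∂μ, (μ[fun ω => X ω ^ 2 | ℱ 0]) ω ≤ B * ((b - a : ℕ) : ℝ) := by
    filter_upwards [hsum, hae] with ω hω hae'
    rw [hω, Finset.sum_apply]
    calc ∑ p ∈ (Finset.Ico a b) ×ˢ (Finset.Ico a b),
          (μ[fun ω' => h p.1 ω' * h p.2 ω' | ℱ 0]) ω
        ≤ ∑ p ∈ (Finset.Ico a b) ×ˢ (Finset.Ico a b), (if p.1 = p.2 then B else 0) :=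
          Finset.sum_le_sum (fun p _ => hae' p.1 p.2)
      _ = B * ((b - a : ℕ) : ℝ) := by
          rw [Finset.sum_product]
          have hinner : ∀ i ∈ Finset.Ico a b,
              (∑ j ∈ Finset.Ico a b, if i = j then B else 0) = B := by
            intro i hi
            rw [Finset.sum_ite_eq]
            simp [hi]
          rw [Finset.sum_congr rfl hinner, Finset.sum_const, Nat.card_Ico, nsmul_eq_mul, mul_comm]
  set A : Set Ω := {ω' | X ω' ≤ -t} with hAdef
  have hAmeas : MeasurableSet A := measurableSet_le hXmeas measurable_const
  have hind_int : Integrable (A.indicator fun _ => (1 : ℝ)) μ :=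
    (integrable_const 1).indicator hAmeas
  have ht2 : (0 : ℝ) < t ^ 2 := by positivity
  have hmaj : (A.indicator fun _ => (1 : ℝ)) ≤ᵐ[μ] fun ω => (t ^ 2)⁻¹ * X ω ^ 2 := by
    filter_upwards with ω
    by_cases hω : ω ∈ A
    · rw [Set.indicator_of_mem hω]
      have hXω : X ω ≤ -t := hω
      have h1 : t ^ 2 ≤ X ω ^ 2 := by nlinarith
      have h2 : (t ^ 2)⁻¹ * t ^ 2 ≤ (t ^ 2)⁻¹ * X ω ^ 2 :=
        mul_le_mul_of_nonneg_left h1 (by positivity)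
      rwa [inv_mul_cancel₀ ht2.ne'] at h2
    · rw [Set.indicator_of_notMem hω]
      positivity
  have hsmul_int : Integrable (fun ω => (t ^ 2)⁻¹ * X ω ^ 2) μ := hXsq_int.const_mul _
  have hcond := condExp_mono (m := ℱ 0) hind_int hsmul_int hmaj
  have hsmul : μ[fun ω => (t ^ 2)⁻¹ * X ω ^ 2 | ℱ 0]
      =ᵐ[μ] fun ω => (t ^ 2)⁻¹ * (μ[fun ω' => X ω' ^ 2 | ℱ 0]) ω := by
    have heq : (fun ω => (t ^ 2)⁻¹ * X ω ^ 2) = (t ^ 2)⁻¹ • (fun ω => X ω ^ 2) := rfl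
    rw [heq]
    filter_upwards [condExp_smul (m := ℱ 0) ((t ^ 2)⁻¹) (fun ω => X ω ^ 2)] with ω hω
    rw [hω]
    simp
  filter_upwards [hcond, hsmul, hvar] with ω h1 h2 h3
  calc (μ[A.indicator (fun _ => (1 : ℝ)) | ℱ 0]) ω
      ≤ (μ[fun ω' => (t ^ 2)⁻¹ * X ω' ^ 2 | ℱ 0]) ω := h1
    _ = (t ^ 2)⁻¹ * (μ[fun ω' => X ω' ^ 2 | ℱ 0]) ω := h2
    _ ≤ (t ^ 2)⁻¹ * (B * ((b - a : ℕ) : ℝ)) := mul_le_mul_of_nonneg_left h3 (by positivity)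
    _ = B * ((b - a : ℕ) : ℝ) / t ^ 2 := by ring


/-- If the conditional probability of `A` given `ℱ 0` is a.s. at most `r`, then
`μ (A ∩ s) ≤ ofReal r * μ s` for every `ℱ 0`-measurable `s`. -/
lemma ruin_meas_inter_le {A : Set Ω} (hA : MeasurableSet A) {r : ℝ}
    (hbd : ∀ᵐ ω ∂μ, (μ[A.indicator (fun _ => (1 : ℝ)) | ℱ 0]) ω ≤ r)
    {s : Set Ω} (hs : MeasurableSet[ℱ 0] s) :
    μ (A ∩ s) ≤ ENNReal.ofReal r * μ s := by
  have hind_int : Integrable (A.indicator fun _ => (1 : ℝ)) μ :=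
    (integrable_const 1).indicator hA
  have hr : 0 ≤ r := by
    have hnn : ∀ᵐ ω ∂μ, 0 ≤ (μ[A.indicator (fun _ => (1 : ℝ)) | ℱ 0]) ω :=
      condExp_nonneg (Eventually.of_forall fun ω => Set.indicator_nonneg (fun _ _ => zero_le_one) ω)
    have : ∀ᵐ _ω ∂μ, (0 : ℝ) ≤ r := by filter_upwards [hnn, hbd] with ω h1 h2; linarith
    obtain ⟨ω, hω⟩ := this.exists
    exact hω
  have hs' : MeasurableSet s := ℱ.le 0 s hs
  have h1 : (μ (A ∩ s)).toReal = ∫ ω in s, A.indicator (fun _ => (1 : ℝ)) ω ∂μ := by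
    rw [setIntegral_indicator hA, setIntegral_const, smul_eq_mul, mul_one, Set.inter_comm]
    rfl
  have h2 : ∫ ω in s, A.indicator (fun _ => (1 : ℝ)) ω ∂μ
      = ∫ ω in s, (μ[A.indicator (fun _ => (1 : ℝ)) | ℱ 0]) ω ∂μ :=
    (setIntegral_condExp (ℱ.le 0) hind_int hs).symm
  have h3 : ∫ ω in s, (μ[A.indicator (fun _ => (1 : ℝ)) | ℱ 0]) ω ∂μ ≤ ∫ _ω in s, r ∂μ :=
    setIntegral_mono_ae integrable_condExp.integrableOn (integrable_const r).integrableOn hbd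
  have h4 : ∫ _ω in s, r ∂μ = r * (μ s).toReal := by
    rw [setIntegral_const, smul_eq_mul, mul_comm]
    rfl
  calc μ (A ∩ s) = ENNReal.ofReal ((μ (A ∩ s)).toReal) :=
        (ENNReal.ofReal_toReal (measure_ne_top μ _)).symm
    _ ≤ ENNReal.ofReal (r * (μ s).toReal) := by
        refine ENNReal.ofReal_le_ofReal ?_
        rw [h1, h2]
        exact h3.trans_eq h4
    _ = ENNReal.ofReal r * ENNReal.ofReal ((μ s).toReal) := ENNReal.ofReal_mul hr
    _ = ENNReal.ofReal r * μ s := by rw [ENNReal.ofReal_toReal (measure_ne_top μ _)]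

/-- A.e. bound on an `ℱ 0`-strongly-measurable function from set-integral bounds. -/
lemma ruin_ae_le_of_setIntegral {f : Ω → ℝ} {T : ℝ}
    (hmf : StronglyMeasurable[ℱ 0] f) (hint : Integrable f μ)
    (hbd : ∀ s, MeasurableSet[ℱ 0] s → ∫ ω in s, f ω ∂μ ≤ T * (μ s).toReal) :
    ∀ᵐ ω ∂μ, f ω ≤ T := by
  have key : ∀ j : ℕ, μ {ω | T + 1 / ((j : ℝ) + 1) ≤ f ω} = 0 := by
    intro j
    set s := {ω | T + 1 / ((j : ℝ) + 1) ≤ f ω} with hsdef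
    have hs0 : MeasurableSet[ℱ 0] s := measurableSet_le measurable_const hmf.measurable
    have hs : MeasurableSet s := ℱ.le 0 _ hs0
    by_contra hne
    have hpos : 0 < (μ s).toReal := ENNReal.toReal_pos hne (measure_ne_top μ s)
    have hge : (T + 1 / ((j : ℝ) + 1)) * (μ s).toReal ≤ ∫ ω in s, f ω ∂μ :=
      setIntegral_ge_of_const_le_real hs (measure_ne_top μ s) (fun x hx => hx) hint.integrableOn
    have hle := hbd s hs0
    have hj : (0 : ℝ) < 1 / ((j : ℝ) + 1) := by positivity
    nlinarith
  have hsub : {ω | T < f ω} ⊆ ⋃ j : ℕ, {ω | T + 1 / ((j : ℝ) + 1) ≤ f ω} := by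
    intro ω hω
    simp only [Set.mem_setOf_eq] at hω
    obtain ⟨j, hj⟩ := exists_nat_one_div_lt (sub_pos.mpr hω)
    exact Set.mem_iUnion.2 ⟨j, by simp only [Set.mem_setOf_eq]; linarith⟩
  have hz : μ {ω | T < f ω} = 0 :=
    measure_mono_null hsub (measure_iUnion_null key)
  rw [ae_iff]
  simpa only [not_le] using hz


lemma ruin_summable_base : Summable (fun n : ℕ => 1 / ((n : ℝ) + 1) ^ 2) := by
  have h0 : Summable (fun n : ℕ => 1 / (n : ℝ) ^ 2) :=
    Real.summable_one_div_nat_pow.mpr one_lt_two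
  have h1 := (summable_nat_add_iff (f := fun n : ℕ => 1 / (n : ℝ) ^ 2) 1).mpr h0
  exact h1.congr (fun n => by push_cast; ring)

lemma ruin_summable {K d : ℝ} (hd : 0 < d) {p : ℕ → ℝ}
    (hp0 : ∀ n, 0 ≤ p n) (hpK : ∀ n, p n ≤ K * ((n : ℝ) + 1) ^ 2) {e : ℝ} (he : 0 ≤ e) :
    Summable (fun n : ℕ => p n / (e + d * ((n : ℝ) + 1) ^ 2) ^ 2) := by
  have hK : 0 ≤ K := by
    have := (hp0 0).trans (hpK 0)
    norm_num at this
    exact this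
  refine Summable.of_nonneg_of_le (fun n => div_nonneg (hp0 n) (by positivity)) (fun n => ?_)
    (ruin_summable_base.mul_left (K / d ^ 2))
  have hx : (0 : ℝ) < ((n : ℝ) + 1) ^ 2 := by positivity
  have h2 : (0 : ℝ) < d * ((n : ℝ) + 1) ^ 2 := by positivity
  calc p n / (e + d * ((n : ℝ) + 1) ^ 2) ^ 2
      ≤ (K * ((n : ℝ) + 1) ^ 2) / (d * ((n : ℝ) + 1) ^ 2) ^ 2 := by
        refine div_le_div₀ (by positivity) (hpK n) (by positivity) ?_
        have : d * ((n : ℝ) + 1) ^ 2 ≤ e + d * ((n : ℝ) + 1) ^ 2 := by linarith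
        exact pow_le_pow_left₀ h2.le this 2
    _ = K / d ^ 2 * (1 / ((n : ℝ) + 1) ^ 2) := by
        field_simp

lemma ruin_tendsto {K d : ℝ} (hd : 0 < d) {p : ℕ → ℝ}
    (hp0 : ∀ n, 0 ≤ p n) (hpK : ∀ n, p n ≤ K * ((n : ℝ) + 1) ^ 2) :
    Tendsto (fun c : ℝ => ∑' n : ℕ, p n / (c + d * ((n : ℝ) + 1) ^ 2) ^ 2)
      atTop (𝓝 0) := by
  have hK : 0 ≤ K := by
    have := (hp0 0).trans (hpK 0)
    norm_num at this
    exact this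
  have hbound : Summable (fun n : ℕ => K * ((n : ℝ) + 1) ^ 2 / (d * ((n : ℝ) + 1) ^ 2) ^ 2) := by
    refine Summable.of_nonneg_of_le (fun n => by positivity) (fun n => le_of_eq ?_)
      (ruin_summable_base.mul_left (K / d ^ 2))
    have hx : ((n : ℝ) + 1) ≠ 0 := by positivity
    field_simp
  have h0 : (0 : ℝ) = ∑' _n : ℕ, (0 : ℝ) := by simp
  rw [h0]
  refine tendsto_tsum_of_dominated_convergence hbound (fun n => ?_) ?_
  · refine Tendsto.div_atTop tendsto_const_nhds ?_
    have h1 : Tendsto (fun c : ℝ => c + d * ((n : ℝ) + 1) ^ 2) atTop atTop :=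
      tendsto_atTop_add_const_right _ _ tendsto_id
    exact (tendsto_pow_atTop two_ne_zero).comp h1
  · filter_upwards [eventually_ge_atTop (0 : ℝ)] with c hc
    intro n
    have hx : (0 : ℝ) < ((n : ℝ) + 1) ^ 2 := by positivity
    have h2 : (0 : ℝ) < d * ((n : ℝ) + 1) ^ 2 := by positivity
    rw [Real.norm_eq_abs, abs_of_nonneg (div_nonneg (hp0 n) (by positivity))]
    refine div_le_div₀ (by positivity) (hpK n) (by positivity) ?_
    refine pow_le_pow_left₀ h2.le (by linarith) 2


lemma ruin_main (hB : 0 < B)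
    (hadapt : ∀ n, StronglyMeasurable[ℱ (n + 1)] (h n))
    (hL2 : ∀ n, MemLp (h n) 2 μ)
    (hvarbd : ∀ n, ∀ᵐ ω ∂μ, (μ[fun ω' => (h n ω') ^ 2 | ℱ 0]) ω ≤ B)
    (horth : ∀ i j, i ≠ j → μ[fun ω => h i ω * h j ω | ℱ 0] =ᵐ[μ] 0)
    (c₁ c₂ α₁ α₂ : ℝ) (hc₂ : 0 ≤ c₂) (hc : c₂ ≤ c₁) (hα₂ : 0 < α₂) (hα : α₂ < α₁) :
    ∀ᵐ ω ∂μ,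
      (μ[Set.indicator {ω' | ∃ n : ℕ, 1 ≤ n ∧
            (∑ j ∈ Finset.range n, h j ω') ≤ -c₁ - α₁ * n} (fun _ => (1 : ℝ)) | ℱ 0]) ω
        ≤ (∑' n : ℕ, B * ((n : ℝ) + 1) ^ 2 / (c₂ + α₂ * ((n : ℝ) + 1) ^ 2) ^ 2)
          + ∑' n : ℕ, B * ((n : ℝ) + 1) * (2 * ((n : ℝ) + 1) + 1)
              / ((c₁ - c₂) + (α₁ - α₂) * ((n : ℝ) + 1) ^ 2) ^ 2 := by
  classical
  have hmeas : ∀ n, Measurable (h n) := fun n => (hadapt n).measurable.mono (ℱ.le _) le_rfl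
  set E : Set Ω := {ω' | ∃ n : ℕ, 1 ≤ n ∧
      (∑ j ∈ Finset.range n, h j ω') ≤ -c₁ - α₁ * n} with hEdef
  set f₁ : ℕ → ℝ := fun n => B * ((n : ℝ) + 1) ^ 2 / (c₂ + α₂ * ((n : ℝ) + 1) ^ 2) ^ 2 with hf₁def
  set f₂ : ℕ → ℝ := fun n => B * ((n : ℝ) + 1) * (2 * ((n : ℝ) + 1) + 1)
      / ((c₁ - c₂) + (α₁ - α₂) * ((n : ℝ) + 1) ^ 2) ^ 2 with hf₂def
  set A : ℕ → Set Ω := fun k =>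
    {ω' | (∑ j ∈ Finset.Ico 0 (k ^ 2), h j ω') ≤ -(c₂ + α₂ * (k : ℝ) ^ 2)} with hAdef
  set Bs : ℕ → ℕ → Set Ω := fun k m =>
    {ω' | (∑ j ∈ Finset.Ico (k ^ 2) (k ^ 2 + m), h j ω')
        ≤ -((c₁ - c₂) + (α₁ - α₂) * (k : ℝ) ^ 2)} with hBsdef
  have hAmeas : ∀ k, MeasurableSet (A k) := fun k =>
    measurableSet_le (Finset.measurable_sum _ fun j _ => hmeas j) measurable_const
  have hBmeas : ∀ k m, MeasurableSet (Bs k m) := fun k m =>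
    measurableSet_le (Finset.measurable_sum _ fun j _ => hmeas j) measurable_const
  have hEmeas : MeasurableSet E := by
    have hE2 : E = ⋃ n : ℕ, ({ω' : Ω | 1 ≤ n}
        ∩ {ω' : Ω | (∑ j ∈ Finset.range n, h j ω') ≤ -c₁ - α₁ * n}) := by
      ext ω
      simp only [hEdef, Set.mem_setOf_eq, Set.mem_iUnion, Set.mem_inter_iff]
    rw [hE2]
    exact MeasurableSet.iUnion fun n => (MeasurableSet.const _).inter
      (measurableSet_le (Finset.measurable_sum _ fun j _ => hmeas j) measurable_const)
  have hEint : Integrable (E.indicator fun _ => (1 : ℝ)) μ := (integrable_const 1).indicator hEmeas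
  -- the covering by the two families
  have hcover : E ⊆ (⋃ n : ℕ, A (n + 1))
      ∪ (⋃ n : ℕ, ⋃ m ∈ Finset.range (2 * (n + 1) + 1), Bs (n + 1) m) := by
    rintro ω ⟨n, hn1, hsum⟩
    set k := Nat.sqrt n with hk
    have hk1 : 1 ≤ k := by
      have h1 := Nat.sqrt_le_sqrt hn1
      simpa using h1
    have hkn : k ^ 2 ≤ n := Nat.sqrt_le' n
    have hnk : n < (k + 1) ^ 2 := Nat.lt_succ_sqrt' n
    have hcast : ((k : ℝ)) ^ 2 ≤ (n : ℝ) := by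
      have := (Nat.cast_le (α := ℝ)).mpr hkn
      push_cast at this
      linarith
    by_cases hA : ω ∈ A k
    · left
      refine Set.mem_iUnion.2 ⟨k - 1, ?_⟩
      rw [Nat.sub_add_cancel hk1]
      exact hA
    · right
      refine Set.mem_iUnion.2 ⟨k - 1, ?_⟩
      rw [Nat.sub_add_cancel hk1]
      have h5 : n < 2 * k + 1 + k ^ 2 := by
        calc n < (k + 1) ^ 2 := hnk
          _ = 2 * k + 1 + k ^ 2 := by ring
      refine Set.mem_biUnion (Finset.mem_range.mpr ((tsub_lt_iff_right hkn).mpr h5)) ?_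
      show (∑ j ∈ Finset.Ico (k ^ 2) (k ^ 2 + (n - k ^ 2)), h j ω)
          ≤ -((c₁ - c₂) + (α₁ - α₂) * (k : ℝ) ^ 2)
      rw [Nat.add_sub_cancel' hkn]
      have hsplit : ∑ j ∈ Finset.Ico (k ^ 2) n, h j ω
          = (∑ j ∈ Finset.range n, h j ω) - ∑ j ∈ Finset.range (k ^ 2), h j ω :=
        Finset.sum_Ico_eq_sub _ hkn
      have hnotA : -(c₂ + α₂ * (k : ℝ) ^ 2) < ∑ j ∈ Finset.range (k ^ 2), h j ω := by
        simp only [hAdef, Set.mem_setOf_eq, not_le, ← Finset.range_eq_Ico] at hA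
        exact hA
      have hα₁n : α₁ * ((k : ℝ)) ^ 2 ≤ α₁ * (n : ℝ) :=
        mul_le_mul_of_nonneg_left hcast (by linarith)
      rw [hsplit]
      linarith
  -- conditional Chebyshev bounds
  have hA_bd : ∀ n : ℕ, ∀ᵐ ω ∂μ,
      (μ[(A (n + 1)).indicator (fun _ => (1 : ℝ)) | ℱ 0]) ω ≤ f₁ n := by
    intro n
    have hx2 : (0 : ℝ) < ((n + 1 : ℕ) : ℝ) ^ 2 := by positivity
    have ht : 0 < c₂ + α₂ * ((n + 1 : ℕ) : ℝ) ^ 2 := by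
      have := mul_pos hα₂ hx2
      linarith
    have hcheb := ruin_cheb hB hadapt hL2 hvarbd horth 0 ((n + 1) ^ 2)
      (c₂ + α₂ * ((n + 1 : ℕ) : ℝ) ^ 2) ht
    refine hcheb.mono fun ω hω => ?_
    refine le_trans hω (le_of_eq ?_)
    simp only [Nat.sub_zero, hf₁def]
    push_cast
    ring
  have hB_bd : ∀ n m : ℕ, ∀ᵐ ω ∂μ,
      (μ[(Bs (n + 1) m).indicator (fun _ => (1 : ℝ)) | ℱ 0]) ω
        ≤ B * (m : ℝ) / ((c₁ - c₂) + (α₁ - α₂) * ((n : ℝ) + 1) ^ 2) ^ 2 := by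
    intro n m
    have hx2 : (0 : ℝ) < ((n + 1 : ℕ) : ℝ) ^ 2 := by positivity
    have ht : 0 < (c₁ - c₂) + (α₁ - α₂) * ((n + 1 : ℕ) : ℝ) ^ 2 := by
      have := mul_pos (sub_pos.mpr hα) hx2
      linarith
    have hcheb := ruin_cheb hB hadapt hL2 hvarbd horth ((n + 1) ^ 2) ((n + 1) ^ 2 + m)
      ((c₁ - c₂) + (α₁ - α₂) * ((n + 1 : ℕ) : ℝ) ^ 2) ht
    refine hcheb.mono fun ω hω => ?_
    refine le_trans hω (le_of_eq ?_)
    simp only [Nat.add_sub_cancel_left]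
    push_cast
    ring
  -- Gauss sum identity for blocks
  have hgauss : ∀ n : ℕ,
      (∑ m ∈ Finset.range (2 * (n + 1) + 1),
        B * (m : ℝ) / ((c₁ - c₂) + (α₁ - α₂) * ((n : ℝ) + 1) ^ 2) ^ 2) = f₂ n := by
    intro n
    have h2 := Finset.sum_range_id_mul_two (2 * (n + 1) + 1)
    have h3 : (∑ m ∈ Finset.range (2 * (n + 1) + 1), m) * 2 = (2 * (n + 1) + 1) * (2 * (n + 1)) := by
      simpa using h2
    have h2' : ((∑ m ∈ Finset.range (2 * (n + 1) + 1), m : ℕ) : ℝ) * 2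
        = (2 * ((n : ℝ) + 1) + 1) * (2 * ((n : ℝ) + 1)) := by
      exact_mod_cast h3
    have hsumcast : (∑ m ∈ Finset.range (2 * (n + 1) + 1), (m : ℝ))
        = ((∑ m ∈ Finset.range (2 * (n + 1) + 1), m : ℕ) : ℝ) := by push_cast; rfl
    have hval : (∑ m ∈ Finset.range (2 * (n + 1) + 1), (m : ℝ))
        = ((n : ℝ) + 1) * (2 * ((n : ℝ) + 1) + 1) := by
      rw [hsumcast]
      linear_combination h2' / 2
    rw [← Finset.sum_div, ← Finset.mul_sum, hval, hf₂def]
    ring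
  -- nonnegativity and summability
  have hf₁nn : ∀ n : ℕ, 0 ≤ f₁ n := fun n =>
    div_nonneg (mul_nonneg hB.le (sq_nonneg _)) (sq_nonneg _)
  have hf₂nn : ∀ n : ℕ, 0 ≤ f₂ n := fun n =>
    div_nonneg (mul_nonneg (mul_nonneg hB.le (by positivity)) (by positivity)) (sq_nonneg _)
  have hsummable₁ : Summable f₁ :=
    ruin_summable hα₂ (p := fun n => B * ((n : ℝ) + 1) ^ 2)
      (fun n => mul_nonneg hB.le (sq_nonneg _)) (fun n => le_rfl) hc₂
  have hsummable₂ : Summable f₂ := by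
    refine ruin_summable (by linarith : (0:ℝ) < α₁ - α₂)
      (K := 3 * B) (p := fun n => B * ((n : ℝ) + 1) * (2 * ((n : ℝ) + 1) + 1))
      (fun n => mul_nonneg (mul_nonneg hB.le (by positivity)) (by positivity))
      (fun n => ?_) (by linarith : (0:ℝ) ≤ c₁ - c₂)
    have hx : (1 : ℝ) ≤ (n : ℝ) + 1 := by
      have : (0:ℝ) ≤ (n : ℝ) := Nat.cast_nonneg n
      linarith
    show B * ((n:ℝ) + 1) * (2 * ((n:ℝ) + 1) + 1) ≤ 3 * B * ((n:ℝ) + 1) ^ 2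
    nlinarith [mul_nonneg (mul_nonneg hB.le (by linarith : (0:ℝ) ≤ (n:ℝ) + 1))
      (by linarith : (0:ℝ) ≤ (n:ℝ) + 1 - 1)]
  -- the set-integral bound
  have hkey : ∀ s : Set Ω, MeasurableSet[ℱ 0] s →
      ∫ ω in s, (μ[E.indicator (fun _ => (1 : ℝ)) | ℱ 0]) ω ∂μ
        ≤ ((∑' n : ℕ, f₁ n) + ∑' n : ℕ, f₂ n) * (μ s).toReal := by
    intro s hs
    rw [setIntegral_condExp (ℱ.le 0) hEint hs, setIntegral_indicator hEmeas, setIntegral_const,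
      smul_eq_mul, mul_one]
    have hmeasbd : μ (s ∩ E) ≤ ENNReal.ofReal ((∑' n : ℕ, f₁ n) + ∑' n : ℕ, f₂ n) * μ s := by
      have hsub : E ∩ s ⊆ ((⋃ n : ℕ, A (n + 1)) ∩ s)
          ∪ ((⋃ n : ℕ, ⋃ m ∈ Finset.range (2 * (n + 1) + 1), Bs (n + 1) m) ∩ s) := by
        rw [← Set.union_inter_distrib_right]
        exact Set.inter_subset_inter_left s hcover
      have u1 : μ ((⋃ n : ℕ, A (n + 1)) ∩ s) ≤ ∑' n : ℕ, ENNReal.ofReal (f₁ n) * μ s := by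
        rw [Set.iUnion_inter]
        refine (measure_iUnion_le _).trans (ENNReal.tsum_le_tsum fun n => ?_)
        exact ruin_meas_inter_le (hAmeas (n + 1)) (hA_bd n) hs
      have u2 : μ ((⋃ n : ℕ, ⋃ m ∈ Finset.range (2 * (n + 1) + 1), Bs (n + 1) m) ∩ s)
          ≤ ∑' n : ℕ, ENNReal.ofReal (f₂ n) * μ s := by
        rw [Set.iUnion_inter]
        refine (measure_iUnion_le _).trans (ENNReal.tsum_le_tsum fun n => ?_)
        rw [Set.iUnion₂_inter]
        calc μ (⋃ m ∈ Finset.range (2 * (n + 1) + 1), (Bs (n + 1) m ∩ s))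
            ≤ ∑ m ∈ Finset.range (2 * (n + 1) + 1), μ (Bs (n + 1) m ∩ s) :=
              measure_biUnion_finset_le _ _
          _ ≤ ∑ m ∈ Finset.range (2 * (n + 1) + 1),
                ENNReal.ofReal (B * (m : ℝ)
                  / ((c₁ - c₂) + (α₁ - α₂) * ((n : ℝ) + 1) ^ 2) ^ 2) * μ s :=
              Finset.sum_le_sum fun m _ =>
                ruin_meas_inter_le (hBmeas (n + 1) m) (hB_bd n m) hs
          _ = (∑ m ∈ Finset.range (2 * (n + 1) + 1),
                ENNReal.ofReal (B * (m : ℝ)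
                  / ((c₁ - c₂) + (α₁ - α₂) * ((n : ℝ) + 1) ^ 2) ^ 2)) * μ s := by
              rw [Finset.sum_mul]
          _ = ENNReal.ofReal (∑ m ∈ Finset.range (2 * (n + 1) + 1),
                B * (m : ℝ) / ((c₁ - c₂) + (α₁ - α₂) * ((n : ℝ) + 1) ^ 2) ^ 2) * μ s := by
              rw [ENNReal.ofReal_sum_of_nonneg (fun m _ =>
                div_nonneg (mul_nonneg hB.le (Nat.cast_nonneg m)) (sq_nonneg _))]
          _ = ENNReal.ofReal (f₂ n) * μ s := by rw [hgauss n]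
      calc μ (s ∩ E) = μ (E ∩ s) := by rw [Set.inter_comm]
        _ ≤ μ (((⋃ n : ℕ, A (n + 1)) ∩ s)
            ∪ ((⋃ n : ℕ, ⋃ m ∈ Finset.range (2 * (n + 1) + 1), Bs (n + 1) m) ∩ s)) :=
              measure_mono hsub
        _ ≤ μ ((⋃ n : ℕ, A (n + 1)) ∩ s)
            + μ ((⋃ n : ℕ, ⋃ m ∈ Finset.range (2 * (n + 1) + 1), Bs (n + 1) m) ∩ s) :=
              measure_union_le _ _
        _ ≤ (∑' n : ℕ, ENNReal.ofReal (f₁ n) * μ s) + ∑' n : ℕ, ENNReal.ofReal (f₂ n) * μ s :=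
              add_le_add u1 u2
        _ = (ENNReal.ofReal (∑' n : ℕ, f₁ n) + ENNReal.ofReal (∑' n : ℕ, f₂ n)) * μ s := by
              rw [ENNReal.tsum_mul_right, ENNReal.tsum_mul_right,
                ENNReal.ofReal_tsum_of_nonneg hf₁nn hsummable₁,
                ENNReal.ofReal_tsum_of_nonneg hf₂nn hsummable₂, ← add_mul]
        _ = ENNReal.ofReal ((∑' n : ℕ, f₁ n) + ∑' n : ℕ, f₂ n) * μ s := by
              rw [← ENNReal.ofReal_add (tsum_nonneg hf₁nn) (tsum_nonneg hf₂nn)]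
    have hfin : ENNReal.ofReal ((∑' n : ℕ, f₁ n) + ∑' n : ℕ, f₂ n) * μ s ≠ ⊤ :=
      ENNReal.mul_ne_top ENNReal.ofReal_ne_top (measure_ne_top μ s)
    have hmono := ENNReal.toReal_mono hfin hmeasbd
    rwa [ENNReal.toReal_mul, ENNReal.toReal_ofReal
      (add_nonneg (tsum_nonneg hf₁nn) (tsum_nonneg hf₂nn))] at hmono
  exact ruin_ae_le_of_setIntegral stronglyMeasurable_condExp integrable_condExp hkey

end Aux

/-- For martingale differences `(h_i)_{i ≥ 1}` (here `h n` stands for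
`h_{n+1}`, so that it is `ℱ_{n+1}`-measurable with `𝔼[h_{n+1} | ℱ_n] = 0`) with
`𝔼[h_i² | ℱ_0] ≤ B` and `𝔼[h_i h_j | ℱ_0] = 0` for `i ≠ j`, and partial sums
`S_n = ∑_{j=1}^n h_j`, for all `c₁ ≥ c₂ ≥ 0` and `α₁ > α₂ > 0`, almost surely
`ℙ(∃ n ≥ 1 : S_n ≤ -c₁ - α₁ n | ℱ_0)` is bounded by the two explicit series; in
particular for fixed `α₁ > 0` it can be made smaller than any `θ > 0` by choosing `c`
large. -/
theorem martingale_diff_ruin_estimate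
    {Ω : Type*} {mΩ : MeasurableSpace Ω} (μ : Measure Ω) [IsProbabilityMeasure μ]
    (ℱ : Filtration ℕ mΩ) (h : ℕ → Ω → ℝ)
    (B : ℝ) (hB : 0 < B)
    (hadapt : ∀ n, StronglyMeasurable[ℱ (n + 1)] (h n))
    (hL2 : ∀ n, MemLp (h n) 2 μ)
    (hmart : ∀ n, μ[h n | ℱ n] =ᵐ[μ] 0)
    (hvarbd : ∀ n, ∀ᵐ ω ∂μ, (μ[fun ω' => (h n ω') ^ 2 | ℱ 0]) ω ≤ B)
    (horth : ∀ i j, i ≠ j → μ[fun ω => h i ω * h j ω | ℱ 0] =ᵐ[μ] 0)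
    (c₁ c₂ α₁ α₂ : ℝ) (hc₂ : 0 ≤ c₂) (hc : c₂ ≤ c₁) (hα₂ : 0 < α₂) (hα : α₂ < α₁) :
    (∀ᵐ ω ∂μ,
      (μ[Set.indicator {ω' | ∃ n : ℕ, 1 ≤ n ∧
            (∑ j ∈ Finset.range n, h j ω') ≤ -c₁ - α₁ * n} (fun _ => (1 : ℝ)) | ℱ 0]) ω
        ≤ (∑' n : ℕ, B * ((n : ℝ) + 1) ^ 2 / (c₂ + α₂ * ((n : ℝ) + 1) ^ 2) ^ 2)
          + ∑' n : ℕ, B * ((n : ℝ) + 1) * (2 * ((n : ℝ) + 1) + 1)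
              / ((c₁ - c₂) + (α₁ - α₂) * ((n : ℝ) + 1) ^ 2) ^ 2) ∧
    (∀ θ : ℝ, 0 < θ → ∃ c : ℝ, 0 ≤ c ∧ ∀ᵐ ω ∂μ,
      (μ[Set.indicator {ω' | ∃ n : ℕ, 1 ≤ n ∧
            (∑ j ∈ Finset.range n, h j ω') ≤ -c - α₁ * n} (fun _ => (1 : ℝ)) | ℱ 0]) ω
        ≤ θ) := by
  constructor
  · exact ruin_main hB hadapt hL2 hvarbd horth c₁ c₂ α₁ α₂ hc₂ hc hα₂ hα
  · intro θ hθ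
    have hα₁ : 0 < α₁ := lt_trans hα₂ hα
    have hhalf : (0 : ℝ) < α₁ / 2 := by linarith
    have t1 : Tendsto (fun c : ℝ =>
        ∑' n : ℕ, B * ((n : ℝ) + 1) ^ 2 / (c / 2 + α₁ / 2 * ((n : ℝ) + 1) ^ 2) ^ 2)
        atTop (𝓝 0) := by
      have hbase := ruin_tendsto (K := B) hhalf (p := fun n => B * ((n : ℝ) + 1) ^ 2)
        (fun n => mul_nonneg hB.le (sq_nonneg _)) (fun n => le_rfl)
      exact hbase.comp (tendsto_id.atTop_div_const two_pos)
    have t2 : Tendsto (fun c : ℝ =>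
        ∑' n : ℕ, B * ((n : ℝ) + 1) * (2 * ((n : ℝ) + 1) + 1)
          / (c / 2 + α₁ / 2 * ((n : ℝ) + 1) ^ 2) ^ 2) atTop (𝓝 0) := by
      have hbase := ruin_tendsto (K := 3 * B) hhalf
        (p := fun n => B * ((n : ℝ) + 1) * (2 * ((n : ℝ) + 1) + 1))
        (fun n => mul_nonneg (mul_nonneg hB.le (by positivity)) (by positivity))
        (fun n => by
          have hx : (1 : ℝ) ≤ (n : ℝ) + 1 := by
            have : (0 : ℝ) ≤ (n : ℝ) := Nat.cast_nonneg n
            linarith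
          show B * ((n : ℝ) + 1) * (2 * ((n : ℝ) + 1) + 1) ≤ 3 * B * ((n : ℝ) + 1) ^ 2
          nlinarith [mul_nonneg (mul_nonneg hB.le (by linarith : (0:ℝ) ≤ (n:ℝ) + 1))
            (by linarith : (0:ℝ) ≤ (n:ℝ) + 1 - 1)])
      exact hbase.comp (tendsto_id.atTop_div_const two_pos)
    have hlim : Tendsto (fun c : ℝ =>
        (∑' n : ℕ, B * ((n : ℝ) + 1) ^ 2 / (c / 2 + α₁ / 2 * ((n : ℝ) + 1) ^ 2) ^ 2)
          + ∑' n : ℕ, B * ((n : ℝ) + 1) * (2 * ((n : ℝ) + 1) + 1)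
              / (c / 2 + α₁ / 2 * ((n : ℝ) + 1) ^ 2) ^ 2) atTop (𝓝 0) := by
      simpa using t1.add t2
    have hev := ((tendsto_order.1 hlim).2 θ hθ).and (eventually_ge_atTop (0 : ℝ))
    obtain ⟨c, hcθ, hc0⟩ := hev.exists
    refine ⟨c, hc0, ?_⟩
    have hmain := ruin_main hB hadapt hL2 hvarbd horth c (c / 2) α₁ (α₁ / 2)
      (by linarith) (by linarith) hhalf (by linarith)
    filter_upwards [hmain] with ω hω
    refine hω.trans ?_
    have he2 : (∑' n : ℕ, B * ((n : ℝ) + 1) * (2 * ((n : ℝ) + 1) + 1)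
          / ((c - c / 2) + (α₁ - α₁ / 2) * ((n : ℝ) + 1) ^ 2) ^ 2)
        = ∑' n : ℕ, B * ((n : ℝ) + 1) * (2 * ((n : ℝ) + 1) + 1)
          / (c / 2 + α₁ / 2 * ((n : ℝ) + 1) ^ 2) ^ 2 := by
      refine tsum_congr fun n => ?_
      ring_nf
    rw [he2]
    exact hcθ.le
end

section
/- Let 𝒱 = {V_1, V_2, …} be a countable set of Volterra quadratic stochastic operators on S^{m-1} with (V_k x)_k = x_k^2 for all x and all k ∈ {1,…,m}, let (ν_j) be a probability distribution on 𝒱 with ν_j > 0 for j ∈ {1,…,m}, let (T_n)_{n≥1} be i.i.d. with ℙ(T_n = V_j) = ν_j, and let X be an int S^{m-1}-valued random variable independent of (T_n) with 𝔼[|log X_i|] < ∞ for all i. Set ℱ_n = σ(X, T_1, …, T_n), Z_n^i = log((T_n ∘ ⋯ ∘ T_1 X)_i), fix d > max{log m, max_{i≤m} (1/ν_i) log 2}, and define Y_0^i = log X_i and Y_{n+1}^i − Y_n^i = max{Z_{n+1}^i − Z_n^i, −d}. Then for every n ≥ 0 and every i ∈ {1,…,m}, ℙ-a.s. on the event {Y_n^i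 ≤ −d}: 𝔼[Y_{n+1}^i − Y_n^i | ℱ_n] ≤ −ν_i d + log 2 < 0. -/
open MeasureTheory ProbabilityTheory Filter

theorem qso_facts {m : ℕ} (q : Fin m → Fin m → Fin m → ℝ)
    (hnn : ∀ i j l, 0 ≤ q i j l) (hsum : ∀ i j, ∑ l, q i j l = 1)
    (hvol : ∀ i j l, l ≠ i → l ≠ j → q i j l = 0)
    {x : Fin m → ℝ} (hx : x ∈ stdSimplex ℝ (Fin m)) :
    qsoMap q x ∈ stdSimplex ℝ (Fin m) ∧
      ∀ k, x k ^ 2 ≤ qsoMap q x k ∧ qsoMap q x k ≤ 2 * x k := by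
  obtain ⟨hx0, hx1⟩ := hx
  have hqkk : ∀ k, q k k k = 1 := by
    intro k
    have := hsum k k
    rwa [Finset.sum_eq_single k (fun l _ hl => hvol k k l hl hl) (by simp)] at this
  have hqle : ∀ i j l, q i j l ≤ 1 := by
    intro i j l
    calc q i j l ≤ ∑ l', q i j l' :=
          Finset.single_le_sum (fun l' _ => hnn i j l') (Finset.mem_univ l)
      _ = 1 := hsum i j
  have hterm_nn : ∀ k i j, 0 ≤ q i j k * x i * x j := fun k i j =>
    mul_nonneg (mul_nonneg (hnn i j k) (hx0 i)) (hx0 j)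
  constructor
  · constructor
    · intro k
      exact Finset.sum_nonneg fun i _ => Finset.sum_nonneg fun j _ => hterm_nn k i j
    · show ∑ k, ∑ i, ∑ j, q i j k * x i * x j = 1
      rw [Finset.sum_comm]
      calc ∑ i, ∑ k, ∑ j, q i j k * x i * x j
          = ∑ i, ∑ j, ∑ k, q i j k * x i * x j :=
            Finset.sum_congr rfl fun i _ => Finset.sum_comm
        _ = 1 := by
            simp_rw [mul_assoc, ← Finset.sum_mul, hsum, one_mul, ← Finset.mul_sum, hx1,
              mul_one]
            exact hx1
  · intro k
    constructor
    · have h1 : q k k k * x k * x k ≤ ∑ j, q k j k * x k * x j :=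
        Finset.single_le_sum (fun j _ => hterm_nn k k j) (Finset.mem_univ k)
      have h2 : ∑ j, q k j k * x k * x j ≤ ∑ i, ∑ j, q i j k * x i * x j :=
        Finset.single_le_sum (fun i _ => Finset.sum_nonneg fun j _ => hterm_nn k i j)
          (Finset.mem_univ k)
      have : x k ^ 2 = q k k k * x k * x k := by rw [hqkk]; ring
      calc x k ^ 2 = q k k k * x k * x k := this
        _ ≤ _ := h1.trans h2
    · have hq1 : ∀ a b l, q a b l * x a * x b ≤ x a * x b := by
        intro a b l
        nlinarith [mul_nonneg (hx0 a) (hx0 b), hqle a b l, hnn a b l]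
      have hb : ∀ i j, q i j k * x i * x j ≤
          (if i = k then x k * x j else 0) + (if j = k then x i * x k else 0) := by
        intro i j
        by_cases hi : i = k
        · by_cases hj : j = k
          · rw [if_pos hi, if_pos hj, ← hi]
            have := hq1 i j i
            nlinarith [mul_nonneg (hx0 i) (hx0 i)]
          · rw [if_pos hi, if_neg hj, ← hi]
            have := hq1 i j i
            linarith
        · by_cases hj : j = k
          · rw [if_neg hi, if_pos hj, ← hj]
            have := hq1 i j j
            linarith
          · rw [hvol i j k (fun h => hi h.symm) (fun h => hj h.symm)]
            simp [hi, hj]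
      have e1 : ∑ i', ∑ j', (if i' = k then x k * x j' else (0:ℝ)) = x k := by
        rw [Finset.sum_comm]
        simp [Finset.sum_ite_eq', ← Finset.mul_sum, hx1]
      have e2 : ∑ i', ∑ j', (if j' = k then x i' * x k else (0:ℝ)) = x k := by
        simp [Finset.sum_ite_eq', ← Finset.sum_mul, hx1]
      calc qsoMap q x k ≤ ∑ i, ∑ j, ((if i = k then x k * x j else 0) +
            (if j = k then x i * x k else 0)) :=
            Finset.sum_le_sum fun i _ => Finset.sum_le_sum fun j _ => hb i j
        _ = 2 * x k := by
            simp_rw [Finset.sum_add_distrib]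
            rw [e1, e2]; ring

theorem indep_aux {Ω : Type*} {mΩ : MeasurableSpace Ω} (μ : Measure Ω) [IsProbabilityMeasure μ]
    {α : Type*} [mα : MeasurableSpace α]
    (ξ : ℕ → Ω → ℕ) (hξmeas : ∀ n, Measurable (ξ n))
    (hindep : iIndepFun ξ μ)
    (X : Ω → α) (hXmeas : Measurable X)
    (hXindep : IndepFun X (fun ω (n : ℕ) => ξ n ω) μ) (n : ℕ) :
    Indep (MeasurableSpace.comap (ξ n) inferInstance)
      (MeasurableSpace.comap X inferInstance ⊔
        ⨆ l ∈ Finset.range n, MeasurableSpace.comap (ξ l) inferInstance) μ := by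
  have hle : ∀ l, MeasurableSpace.comap (ξ l) inferInstance ≤ mΩ := fun l =>
    (hξmeas l).comap_le
  have hXle : MeasurableSpace.comap X mα ≤ mΩ := hXmeas.comap_le
  have hGle : (⨆ l ∈ Finset.range n, MeasurableSpace.comap (ξ l) inferInstance) ≤ mΩ :=
    iSup₂_le fun l _ => hle l
  have hnS : MeasurableSpace.comap (ξ n) inferInstance ≤
      ⨆ l, MeasurableSpace.comap (ξ l) inferInstance :=
    le_iSup (fun l => MeasurableSpace.comap (ξ l) inferInstance) n
  have hGS : (⨆ l ∈ Finset.range n, MeasurableSpace.comap (ξ l) inferInstance) ≤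
      ⨆ l, MeasurableSpace.comap (ξ l) inferInstance :=
    iSup₂_le fun l _ => le_iSup (fun l => MeasurableSpace.comap (ξ l) inferInstance) l
  -- X independent of the whole ξ-generated σ-algebra
  have hprocX : Indep (MeasurableSpace.comap X mα)
      (⨆ l, MeasurableSpace.comap (ξ l) inferInstance) μ := by
    have h0 : Indep (MeasurableSpace.comap X mα)
        (MeasurableSpace.comap (fun ω (n : ℕ) => ξ n ω) inferInstance) μ := hXindep
    have hpi : (MeasurableSpace.comap (fun ω (n : ℕ) => ξ n ω)
        (inferInstance : MeasurableSpace (ℕ → ℕ))) =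
        ⨆ l, MeasurableSpace.comap (ξ l) inferInstance := by
      rw [show (inferInstance : MeasurableSpace (ℕ → ℕ)) =
          ⨆ l, MeasurableSpace.comap (fun f : ℕ → ℕ => f l) inferInstance from rfl,
        MeasurableSpace.comap_iSup]
      simp_rw [MeasurableSpace.comap_comp]
      rfl
    rwa [hpi] at h0
  have hprocX' := (Indep_iff _ _ _).mp hprocX
  -- ξ n independent of the past
  have hξpast : Indep (MeasurableSpace.comap (ξ n) inferInstance)
      (⨆ l ∈ Finset.range n, MeasurableSpace.comap (ξ l) inferInstance) μ := by
    have h1 := ProbabilityTheory.indep_biSup_compl hle hindep ({n} : Set ℕ)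
    have h1' := (Indep_iff _ _ _).mp h1
    rw [Indep_iff]
    intro t1 t2 ht1 ht2
    refine h1' t1 t2 ?_ ?_
    · exact (le_iSup₂ (f := fun l (_ : l ∈ ({n} : Set ℕ)) =>
        MeasurableSpace.comap (ξ l) inferInstance) n rfl) t1 ht1
    · refine (iSup₂_le (f := fun l (_ : l ∈ Finset.range n) =>
        MeasurableSpace.comap (ξ l) inferInstance) fun l hl => ?_) t2 ht2
      exact le_iSup₂ (f := fun l (_ : l ∈ ({n}ᶜ : Set ℕ)) =>
        MeasurableSpace.comap (ξ l) inferInstance) l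
        (by simp only [Set.mem_compl_iff, Set.mem_singleton_iff]; simp at hl; omega)
  have hξpast' := (Indep_iff _ _ _).mp hξpast
  -- π-system argument
  refine IndepSets.indep (hle n) (sup_le hXle hGle)
    (@MeasurableSpace.isPiSystem_measurableSet Ω (MeasurableSpace.comap (ξ n) inferInstance))
    (p2 := {s | ∃ B C, MeasurableSet[MeasurableSpace.comap X mα] B ∧
      MeasurableSet[⨆ l ∈ Finset.range n, MeasurableSpace.comap (ξ l) inferInstance] C ∧
      s = B ∩ C}) ?_
    (@MeasurableSpace.generateFrom_measurableSet Ω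
      (MeasurableSpace.comap (ξ n) inferInstance)).symm ?_ ?_
  · rintro s1 ⟨B1, C1, hB1, hC1, rfl⟩ s2 ⟨B2, C2, hB2, hC2, rfl⟩ -
    exact ⟨B1 ∩ B2, C1 ∩ C2, hB1.inter hB2, hC1.inter hC2, by ext ω; simp; tauto⟩
  · refine le_antisymm (sup_le ?_ ?_) (MeasurableSpace.generateFrom_le ?_)
    · intro B hB
      exact MeasurableSpace.measurableSet_generateFrom
        ⟨B, Set.univ, hB, MeasurableSet.univ, (Set.inter_univ B).symm⟩
    · intro C hC
      exact MeasurableSpace.measurableSet_generateFrom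
        ⟨Set.univ, C, MeasurableSet.univ, hC, (Set.univ_inter C).symm⟩
    · rintro s ⟨B, C, hB, hC, rfl⟩
      exact ((le_sup_left (b := ⨆ l ∈ Finset.range n,
          MeasurableSpace.comap (ξ l) inferInstance)) B hB).inter
        ((le_sup_right (a := MeasurableSpace.comap X mα)) C hC)
  · rw [IndepSets_iff]
    rintro A s hA ⟨B, C, hB, hC, rfl⟩
    have hAC : MeasurableSet[⨆ l, MeasurableSpace.comap (ξ l) inferInstance] (A ∩ C) :=
      (hnS A hA).inter (hGS C hC)
    have e1 : A ∩ (B ∩ C) = B ∩ (A ∩ C) := by ext ω; simp; tauto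
    have e2 : μ (B ∩ (A ∩ C)) = μ B * μ (A ∩ C) := hprocX' B (A ∩ C) hB hAC
    have e3 : μ (A ∩ C) = μ A * μ C := hξpast' A C hA hC
    have e4 : μ (B ∩ C) = μ B * μ C := hprocX' B C hB (hGS C hC)
    rw [e1, e2, e3, e4]; ring

/-- For the cut-off log-coordinate process `Y_n^i` of the random iteration
of Volterra QSOs (with `(V_k x)_k = x_k^2` for `k < m`, i.i.d. choices `T_n = V_{ξ_n}`
with law `ν`, initial value `X` in the interior of the simplex independent of the
choices, and cut-off level `d > max{log m, max_i (1/ν_i) log 2}`), one has, a.s. on the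
event `{Y_n^i ≤ -d}`: `𝔼[Y_{n+1}^i - Y_n^i | ℱ_n] ≤ -ν_i d + log 2 < 0`. -/
theorem cutoff_log_process_drift
    {Ω : Type*} {mΩ : MeasurableSpace Ω} (μ : Measure Ω) [IsProbabilityMeasure μ]
    (m : ℕ) (hm : 2 ≤ m)
    (p : ℕ → Fin m → Fin m → Fin m → ℝ)
    (hsymm : ∀ n i j l, p n i j l = p n j i l)
    (hnonneg : ∀ n i j l, 0 ≤ p n i j l)
    (hsum : ∀ n i j, ∑ l, p n i j l = 1)
    (hvol : ∀ n i j l, l ≠ i → l ≠ j → p n i j l = 0)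
    (hsq : ∀ k : Fin m, ∀ x ∈ stdSimplex ℝ (Fin m), qsoMap (p (k : ℕ)) x k = x k ^ 2)
    (ν : ℕ → ℝ) (hν0 : ∀ j, 0 ≤ ν j) (hν1 : ∑' j, ν j = 1)
    (hνpos : ∀ k : Fin m, 0 < ν (k : ℕ))
    (ξ : ℕ → Ω → ℕ) (hξmeas : ∀ n, Measurable (ξ n))
    (hindep : iIndepFun ξ μ)
    (hlaw : ∀ n j, μ {ω | ξ n ω = j} = ENNReal.ofReal (ν j))
    (X : Ω → Fin m → ℝ) (hXmeas : Measurable X)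
    (hXsimplex : ∀ ω, X ω ∈ stdSimplex ℝ (Fin m) ∧ ∀ i, 0 < X ω i)
    (hXlog : ∀ i : Fin m, Integrable (fun ω => |Real.log (X ω i)|) μ)
    (hXindep : IndepFun X (fun ω (n : ℕ) => ξ n ω) μ)
    (d : ℝ) (hd₁ : Real.log m < d) (hd₂ : ∀ i : Fin m, (1 / ν (i : ℕ)) * Real.log 2 < d)
    (F : ℕ → MeasurableSpace Ω)
    (hF : ∀ n, F n = MeasurableSpace.comap X inferInstance ⊔
        ⨆ l ∈ Finset.range n, MeasurableSpace.comap (ξ l) inferInstance)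
    (Z : ℕ → Fin m → Ω → ℝ)
    (hZ : ∀ n i ω, Z n i ω =
      Real.log (((List.range n).foldl (fun y l => qsoMap (p (ξ l ω)) y) (X ω)) i))
    (Y : ℕ → Fin m → Ω → ℝ)
    (hY0 : ∀ i ω, Y 0 i ω = Real.log (X ω i))
    (hYstep : ∀ n i ω, Y (n + 1) i ω = Y n i ω + max (Z (n + 1) i ω - Z n i ω) (-d)) :
    ∀ (n : ℕ) (i : Fin m),
      (-ν (i : ℕ) * d + Real.log 2 < 0) ∧
      (∀ᵐ ω ∂μ, Y n i ω ≤ -d →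
        (μ[fun ω' => Y (n + 1) i ω' - Y n i ω' | F n]) ω
          ≤ -ν (i : ℕ) * d + Real.log 2) := by
  -- basic numeric facts
  have hlog2pos : (0:ℝ) < Real.log 2 := Real.log_pos one_lt_two
  have hm2 : (2:ℝ) ≤ (m:ℝ) := by exact_mod_cast hm
  have hd0 : 0 < d := lt_trans (Real.log_pos (by linarith)) hd₁
  have hnegd : -d ≤ Real.log 2 := by linarith
  -- iterates
  set G : ℕ → Ω → Fin m → ℝ :=
    fun n ω => (List.range n).foldl (fun y l => qsoMap (p (ξ l ω)) y) (X ω) with hGdef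
  have hGsucc : ∀ k ω, G (k+1) ω = qsoMap (p (ξ k ω)) (G k ω) := by
    intro k ω
    simp only [hGdef, List.range_succ, List.foldl_append, List.foldl_cons, List.foldl_nil]
  have hGfacts : ∀ k ω, G k ω ∈ stdSimplex ℝ (Fin m) ∧ ∀ j, 0 < G k ω j := by
    intro k
    induction k with
    | zero => exact fun ω => hXsimplex ω
    | succ k ih =>
      intro ω
      obtain ⟨hmem, hpos⟩ := ih ω
      have hq := qso_facts (p (ξ k ω)) (hnonneg _) (hsum _) (hvol _) hmem
      rw [hGsucc]
      refine ⟨hq.1, fun j => ?_⟩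
      exact lt_of_lt_of_le (pow_pos (hpos j) 2) ((hq.2 j).1)
  have hGub : ∀ k ω j, G (k+1) ω j ≤ 2 * G k ω j := by
    intro k ω j
    rw [hGsucc]
    exact ((qso_facts (p (ξ k ω)) (hnonneg _) (hsum _) (hvol _) (hGfacts k ω).1).2 j).2
  -- measurability of the iterates w.r.t. any sub-σ-algebra
  have hGmeasAux : ∀ (m' : MeasurableSpace Ω) (N : ℕ), Measurable[m'] X →
      (∀ l, l < N → Measurable[m'] (ξ l)) → ∀ k, k ≤ N → Measurable[m'] (G k) := by
    intro m' N hX' hξ' k hk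
    induction k with
    | zero => exact hX'
    | succ k ih =>
      have hGk := ih (le_trans (Nat.le_succ k) hk)
      have hre : G (k+1) = fun ω => qsoMap (p (ξ k ω)) (G k ω) := funext fun ω => hGsucc k ω
      rw [hre]
      refine measurable_pi_lambda _ fun j => ?_
      simp only [qsoMap]
      refine Finset.measurable_sum _ fun i' _ => Finset.measurable_sum _ fun j' _ => ?_
      have hpm : Measurable[m'] fun ω => p (ξ k ω) i' j' j :=
        (measurable_from_top (f := fun a : ℕ => p a i' j' j)).comp
          (hξ' k (lt_of_lt_of_le (Nat.lt_succ_self k) hk))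
      exact (hpm.mul ((measurable_pi_apply i').comp hGk)).mul
        ((measurable_pi_apply j').comp hGk)
  have hGmeas : ∀ k, Measurable (G k) := fun k =>
    hGmeasAux mΩ k hXmeas (fun l _ => hξmeas l) k le_rfl
  intro n i
  -- measurability w.r.t. F n
  have hFle : F n ≤ mΩ := by
    rw [hF]
    refine sup_le hXmeas.comap_le (iSup₂_le fun l _ => (hξmeas l).comap_le)
  have hXF : Measurable[F n] X := by
    rw [hF]
    exact Measurable.mono (measurable_iff_comap_le.mpr le_rfl) le_sup_left le_rfl
  have hξF : ∀ l, l < n → Measurable[F n] (ξ l) := by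
    intro l hl
    rw [hF]
    refine Measurable.mono (measurable_iff_comap_le.mpr le_rfl) ?_ le_rfl
    exact le_trans (le_iSup₂ (f := fun l (_ : l ∈ Finset.range n) =>
      MeasurableSpace.comap (ξ l) inferInstance) l (Finset.mem_range.mpr hl)) le_sup_right
  have hZmeas : ∀ k, Measurable (Z k i) := by
    intro k
    have : Z k i = fun ω => Real.log (G k ω i) := funext fun ω => hZ k i ω
    rw [this]
    exact Real.measurable_log.comp ((measurable_pi_apply i).comp (hGmeas k))
  have hZmeasF : ∀ k, k ≤ n → Measurable[F n] (Z k i) := by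
    intro k hk
    have : Z k i = fun ω => Real.log (G k ω i) := funext fun ω => hZ k i ω
    rw [this]
    exact Real.measurable_log.comp ((measurable_pi_apply i).comp
      (hGmeasAux (F n) n hXF hξF k hk))
  have hYmeasF : ∀ k, k ≤ n → Measurable[F n] (Y k i) := by
    intro k hk
    induction k with
    | zero =>
      have : Y 0 i = fun ω => Real.log (X ω i) := funext fun ω => hY0 i ω
      rw [this]
      exact Real.measurable_log.comp ((measurable_pi_apply i).comp hXF)
    | succ k ih =>
      have hre : Y (k+1) i = fun ω => Y k i ω + max (Z (k+1) i ω - Z k i ω) (-d) :=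
        funext fun ω => hYstep k i ω
      rw [hre]
      exact ((ih (le_trans (Nat.le_succ k) hk)).add
        (((hZmeasF (k+1) hk).sub (hZmeasF k (le_trans (Nat.le_succ k) hk))).max
          measurable_const))
  -- Z is dominated by Y
  have hZleY : ∀ k ω, Z k i ω ≤ Y k i ω := by
    intro k
    induction k with
    | zero =>
      intro ω
      rw [hZ 0 i ω, hY0 i ω]
      simp
    | succ k ih =>
      intro ω
      rw [hYstep k i ω]
      have h1 := le_max_left (Z (k+1) i ω - Z k i ω) (-d)
      linarith [ih ω]
  -- increment of Z is at most log 2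
  have hΔ : ∀ ω, Z (n+1) i ω - Z n i ω ≤ Real.log 2 := by
    intro ω
    rw [hZ (n+1) i ω, hZ n i ω]
    have h1 : G (n+1) ω i ≤ 2 * G n ω i := hGub n ω i
    have h2 : 0 < G (n+1) ω i := (hGfacts (n+1) ω).2 i
    have h3 : 0 < G n ω i := (hGfacts n ω).2 i
    have h4 := Real.log_le_log h2 h1
    rw [Real.log_mul two_ne_zero (ne_of_gt h3)] at h4
    linarith
  set g : Ω → ℝ := fun ω' => Y (n + 1) i ω' - Y n i ω' with hgdef
  have hg_eq : ∀ ω, g ω = max (Z (n+1) i ω - Z n i ω) (-d) := by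
    intro ω
    rw [hgdef]
    simp only
    rw [hYstep n i ω]
    ring
  have hgle : ∀ ω, g ω ≤ Real.log 2 := fun ω => by
    rw [hg_eq]; exact max_le (hΔ ω) hnegd
  have hgge : ∀ ω, -d ≤ g ω := fun ω => by rw [hg_eq]; exact le_max_right _ _
  have hg_meas : Measurable g := by
    have he : g = fun ω => max (Z (n+1) i ω - Z n i ω) (-d) := funext hg_eq
    rw [he]
    exact ((hZmeas (n+1)).sub (hZmeas n)).max measurable_const
  have hg_bd : ∀ ω : Ω, ‖g ω‖ ≤ max d (Real.log 2) := by
    intro ω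
    rw [Real.norm_eq_abs, abs_le]
    constructor
    · have h1 : -(max d (Real.log 2)) ≤ -d := neg_le_neg (le_max_left _ _)
      linarith [hgge ω]
    · exact le_trans (hgle ω) (le_max_right _ _)
  have hg_int : Integrable g μ :=
    Integrable.mono' (integrable_const (max d (Real.log 2))) hg_meas.aestronglyMeasurable
      (ae_of_all _ hg_bd)
  set hfun : Ω → ℝ := fun ω => if ξ n ω = (i:ℕ) then -d else Real.log 2 with hhdef
  have hh_eq : hfun = (fun a : ℕ => if a = (i:ℕ) then -d else Real.log 2) ∘ ξ n := rfl
  have hh_meas : Measurable hfun := by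
    rw [hh_eq]; exact measurable_from_top.comp (hξmeas n)
  have hh_bd : ∀ ω : Ω, ‖hfun ω‖ ≤ max d (Real.log 2) := by
    intro ω
    rw [hhdef]
    simp only
    by_cases hc : ξ n ω = (i:ℕ)
    · rw [if_pos hc, Real.norm_eq_abs, abs_le]
      constructor
      · exact neg_le_neg (le_max_left _ _)
      · linarith [le_max_right d (Real.log 2)]
    · rw [if_neg hc, Real.norm_eq_abs, abs_le]
      constructor
      · have : (0:ℝ) < max d (Real.log 2) := lt_max_of_lt_left hd0
        linarith
      · exact le_max_right _ _
  have hh_int : Integrable hfun μ :=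
    Integrable.mono' (integrable_const (max d (Real.log 2))) hh_meas.aestronglyMeasurable
      (ae_of_all _ hh_bd)
  have hh_smeas : StronglyMeasurable[MeasurableSpace.comap (ξ n) inferInstance] hfun := by
    rw [hh_eq]
    exact (measurable_from_top.comp (measurable_iff_comap_le.mpr le_rfl)).stronglyMeasurable
  set A : Set Ω := {ω | Y n i ω ≤ -d} with hAdef
  have hA : MeasurableSet[F n] A := measurableSet_le (hYmeasF n le_rfl) measurable_const
  have hAmΩ : MeasurableSet A := hFle _ hA
  -- pointwise comparison on A
  have hptw : ∀ ω, Y n i ω ≤ -d → g ω ≤ hfun ω := by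
    intro ω hω
    rw [hg_eq ω, hhdef]
    simp only
    by_cases hc : ξ n ω = (i:ℕ)
    · rw [if_pos hc]
      have hfold : G (n+1) ω i = (G n ω i)^2 := by
        rw [hGsucc n ω, hc]
        exact hsq i (G n ω) (hGfacts n ω).1
      have hZ1' : Z (n+1) i ω = Real.log (G (n+1) ω i) := hZ (n+1) i ω
      have hZn1 : Z (n+1) i ω = 2 * Real.log (G n ω i) := by
        rw [hZ1', hfold, Real.log_pow]
        push_cast; ring
      have hZZ : Z (n+1) i ω - Z n i ω = Z n i ω := by
        rw [hZn1, hZ n i ω]; ring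
      rw [hZZ]
      exact max_le (le_trans (hZleY n ω) hω) le_rfl
    · rw [if_neg hc]
      exact max_le (hΔ ω) hnegd
  have hindic : ∀ ω, A.indicator g ω ≤ A.indicator hfun ω := by
    intro ω
    by_cases hω : ω ∈ A
    · rw [Set.indicator_of_mem hω, Set.indicator_of_mem hω]
      exact hptw ω hω
    · rw [Set.indicator_of_notMem hω, Set.indicator_of_notMem hω]
  -- conditional expectation manipulations
  have hgi_int : Integrable (A.indicator g) μ := hg_int.indicator hAmΩ
  have hhi_int : Integrable (A.indicator hfun) μ := hh_int.indicator hAmΩ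
  have hmono : μ[A.indicator g|F n] ≤ᵐ[μ] μ[A.indicator hfun|F n] :=
    condExp_mono hgi_int hhi_int (ae_of_all _ hindic)
  have hcg : μ[A.indicator g|F n] =ᵐ[μ] A.indicator (μ[g|F n]) := condExp_indicator hg_int hA
  have hch : μ[A.indicator hfun|F n] =ᵐ[μ] A.indicator (μ[hfun|F n]) :=
    condExp_indicator hh_int hA
  have hindep' : Indep (MeasurableSpace.comap (ξ n) inferInstance) (F n) μ := by
    rw [hF]
    exact indep_aux μ ξ hξmeas hindep X hXmeas hXindep n
  have hce : μ[hfun|F n] =ᵐ[μ] fun _ => ∫ ω, hfun ω ∂μ :=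
    condExp_indep_eq (hξmeas n).comap_le hFle hh_smeas hindep'
  -- the integral of hfun
  have hsetm : MeasurableSet {ω | ξ n ω = (i:ℕ)} := hξmeas n (measurableSet_singleton _)
  have hh_split : hfun = fun ω => Real.log 2 +
      Set.indicator {ω | ξ n ω = (i:ℕ)} (fun _ => -d - Real.log 2) ω := by
    funext ω
    rw [hhdef]
    simp only
    by_cases hc : ξ n ω = (i:ℕ)
    · rw [if_pos hc, Set.indicator_of_mem (show ω ∈ {ω | ξ n ω = (i:ℕ)} from hc)]; ring
    · rw [if_neg hc, Set.indicator_of_notMem (show ω ∉ {ω | ξ n ω = (i:ℕ)} from hc)]; ring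
  have hint : ∫ ω, hfun ω ∂μ = Real.log 2 + (ν (i:ℕ)) * (-d - Real.log 2) := by
    rw [hh_split]
    rw [integral_add (integrable_const _) ((integrable_const _).indicator hsetm)]
    rw [integral_const, integral_indicator_const _ hsetm, measureReal_def μ {ω | ξ n ω = (i:ℕ)}, hlaw n (i:ℕ),
      ENNReal.toReal_ofReal (hν0 _)]
    simp [measure_univ]
  have hle_c : ∫ ω, hfun ω ∂μ ≤ -ν (i:ℕ) * d + Real.log 2 := by
    rw [hint]
    nlinarith [mul_nonneg (hν0 (i:ℕ)) hlog2pos.le]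
  have hpart1 : -ν (i:ℕ) * d + Real.log 2 < 0 := by
    have hp := hνpos i
    have h2 := hd₂ i
    have h3 : Real.log 2 < ν (i:ℕ) * d := by
      calc Real.log 2 = ν (i:ℕ) * ((1 / ν (i:ℕ)) * Real.log 2) := by field_simp
        _ < ν (i:ℕ) * d := by exact mul_lt_mul_of_pos_left h2 hp
    linarith
  refine ⟨hpart1, ?_⟩
  filter_upwards [hmono, hcg, hch, hce] with ω e1 e2 e3 e4 hω
  have hωA : ω ∈ A := hω
  calc (μ[g|F n]) ω = A.indicator (μ[g|F n]) ω := (Set.indicator_of_mem hωA _).symm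
    _ = (μ[A.indicator g|F n]) ω := e2.symm
    _ ≤ (μ[A.indicator hfun|F n]) ω := e1
    _ = A.indicator (μ[hfun|F n]) ω := e3
    _ = (μ[hfun|F n]) ω := Set.indicator_of_mem hωA _
    _ = ∫ ω', hfun ω' ∂μ := e4
    _ ≤ -ν (i:ℕ) * d + Real.log 2 := hle_c
end
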